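/- arXiv:1301.4807 — 3 statements merged into one kernel-verified Lean document; each statement's English description precedes it below -/
import Mathlib

section
/- For a composition m = g ∘ F_β with g ∈ C²(ℝ), the second partial derivatives satisfy ∂_j ∂_k m(z) = g''(F_β(z)) π_j(z) π_k(z) + β g'(F_β(z)) w_{jk}(z), and consequently ∑_{j,k=1}^p |∂_j ∂_k m(z)| ≤ |g''(F_β(z))| + 2β |g'(F_β(z))| for every z ∈ ℝ^p. -/
open MeasureTheory ProbabilityTheory Real

/-- The smooth max function `F_β`. -/
noncomputable def Fbeta (p : ℕ) (β : ℝ) (z : Fin p → ℝ) : ℝ :=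
  β⁻¹ * Real.log (∑ j, Real.exp (β * z j))

/-- The softmax weights `π_j`. -/
noncomputable def piB (p : ℕ) (β : ℝ) (z : Fin p → ℝ) (j : Fin p) : ℝ :=
  Real.exp (β * z j) / ∑ m, Real.exp (β * z m)

/-- `w_{jk}(z) = 1(j=k) π_j(z) − π_j(z) π_k(z)`. -/
noncomputable def wB (p : ℕ) (β : ℝ) (z : Fin p → ℝ) (j k : Fin p) : ℝ :=
  (if j = k then piB p β z j else 0) - piB p β z j * piB p β z k

section aux
variable (p : ℕ) (β : ℝ)

noncomputable def Sb (z : Fin p → ℝ) : ℝ := ∑ m, Real.exp (β * z m)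

lemma Sb_pos (hp : 1 ≤ p) (z : Fin p → ℝ) : 0 < Sb p β z := by
  haveI : Nonempty (Fin p) := Fin.pos_iff_nonempty.mp hp
  exact Finset.sum_pos (fun i _ => Real.exp_pos _) Finset.univ_nonempty

lemma piB_pos (hp : 1 ≤ p) (z : Fin p → ℝ) (j : Fin p) : 0 < piB p β z j :=
  div_pos (Real.exp_pos _) (Sb_pos p β hp z)

lemma piB_le_one (hp : 1 ≤ p) (z : Fin p → ℝ) (j : Fin p) : piB p β z j ≤ 1 := by
  have hS := Sb_pos p β hp z
  rw [show piB p β z j = Real.exp (β * z j) / Sb p β z from rfl, div_le_one hS]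
  simpa [Sb] using Finset.single_le_sum (f := fun i => Real.exp (β * z i))
    (fun i _ => (Real.exp_pos _).le) (Finset.mem_univ j)

lemma sum_piB (hp : 1 ≤ p) (z : Fin p → ℝ) : ∑ j, piB p β z j = 1 := by
  have : ∀ j, piB p β z j = Real.exp (β * z j) / Sb p β z := fun j => rfl
  simp only [this, ← Finset.sum_div]
  exact div_self (Sb_pos p β hp z).ne'

/-- linear functional with coefficients c -/
noncomputable def Lc (c : Fin p → ℝ) : (Fin p → ℝ) →L[ℝ] ℝ :=
  ∑ j, c j • (ContinuousLinearMap.proj j : (Fin p → ℝ) →L[ℝ] ℝ)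

lemma Lc_apply (c v : Fin p → ℝ) : Lc p c v = ∑ j, c j * v j := by
  simp [Lc]

lemma Lc_single (c : Fin p → ℝ) (k : Fin p) : Lc p c (Pi.single k 1) = c k := by
  rw [Lc_apply]
  simp [Pi.single_apply]

lemma hasFDerivAt_Sb (z : Fin p → ℝ) :
    HasFDerivAt (Sb p β) (Lc p (fun j => Real.exp (β * z j) * β)) z := by
  have h : ∀ j : Fin p, HasFDerivAt (fun y : Fin p → ℝ => Real.exp (β * y j))
      ((Real.exp (β * z j) * β) • (ContinuousLinearMap.proj j : (Fin p → ℝ) →L[ℝ] ℝ)) z := by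
    intro j
    have h1 : HasDerivAt (fun t : ℝ => Real.exp (β * t)) (Real.exp (β * z j) * β) (z j) := by
      simpa [mul_comm, Function.comp_def] using ((Real.hasDerivAt_exp (β * z j)).comp (z j)
        ((hasDerivAt_id (z j)).const_mul β))
    exact h1.comp_hasFDerivAt z
      (ContinuousLinearMap.proj j : (Fin p → ℝ) →L[ℝ] ℝ).hasFDerivAt
  have hs := HasFDerivAt.sum (u := Finset.univ) (fun j _ => h j)
  have he : (∑ i ∈ Finset.univ, fun y : Fin p → ℝ => Real.exp (β * y i)) = Sb p β := by
    ext y; simp [Sb]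
  rw [he] at hs
  exact hs

lemma hasFDerivAt_F (hp : 1 ≤ p) (hβ : 0 < β) (z : Fin p → ℝ) :
    HasFDerivAt (Fbeta p β) (Lc p (piB p β z)) z := by
  have hS := Sb_pos p β hp z
  have hlog : HasDerivAt Real.log (Sb p β z)⁻¹ (Sb p β z) := Real.hasDerivAt_log hS.ne'
  have h1 : HasFDerivAt (fun y => Real.log (Sb p β y))
      ((Sb p β z)⁻¹ • Lc p (fun j => Real.exp (β * z j) * β)) z :=
    hlog.comp_hasFDerivAt z (hasFDerivAt_Sb p β z)
  have h2 : HasFDerivAt (Fbeta p β)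
      (β⁻¹ • ((Sb p β z)⁻¹ • Lc p (fun j => Real.exp (β * z j) * β))) z := by
    have := h1.const_smul β⁻¹
    exact this
  convert h2 using 1
  ext v
  simp only [ContinuousLinearMap.coe_smul', Pi.smul_apply, Lc_apply, smul_eq_mul,
    Finset.mul_sum, piB, Sb]
  refine Finset.sum_congr rfl fun j _ => ?_
  have hb : β * β⁻¹ = 1 := mul_inv_cancel₀ hβ.ne'
  linear_combination (-(Real.exp (β * z j) * v j * (∑ x : Fin p, Real.exp (β * z x))⁻¹)) * hb
end aux

section main
variable (p : ℕ) (β : ℝ)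

lemma hasFDerivAt_exp_coord (z : Fin p → ℝ) (k : Fin p) :
    HasFDerivAt (fun y : Fin p → ℝ => Real.exp (β * y k))
      ((Real.exp (β * z k) * β) • (ContinuousLinearMap.proj k : (Fin p → ℝ) →L[ℝ] ℝ)) z := by
  have h1 : HasDerivAt (fun t : ℝ => Real.exp (β * t)) (Real.exp (β * z k) * β) (z k) := by
    simpa [mul_comm, Function.comp_def] using ((Real.hasDerivAt_exp (β * z k)).comp (z k)
      ((hasDerivAt_id (z k)).const_mul β))
  exact h1.comp_hasFDerivAt z
    (ContinuousLinearMap.proj k : (Fin p → ℝ) →L[ℝ] ℝ).hasFDerivAt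

lemma hasFDerivAt_m (hp : 1 ≤ p) (hβ : 0 < β) (g : ℝ → ℝ) (hg : ContDiff ℝ 2 g)
    (y : Fin p → ℝ) :
    HasFDerivAt (fun w => g (Fbeta p β w)) (deriv g (Fbeta p β y) • Lc p (piB p β y)) y := by
  have hgd : HasDerivAt g (deriv g (Fbeta p β y)) (Fbeta p β y) :=
    ((hg.differentiable (by norm_num)) _).hasDerivAt
  exact hgd.comp_hasFDerivAt y (hasFDerivAt_F p β hp hβ y)

lemma second_partial (hp : 1 ≤ p) (hβ : 0 < β) (g : ℝ → ℝ) (hg : ContDiff ℝ 2 g)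
    (z : Fin p → ℝ) (j k : Fin p) :
    fderiv ℝ (fun y => fderiv ℝ (fun w => g (Fbeta p β w)) y (Pi.single k 1)) z (Pi.single j 1)
      = deriv (deriv g) (Fbeta p β z) * piB p β z j * piB p β z k
        + β * deriv g (Fbeta p β z) * wB p β z j k := by
  have hfun : (fun y => fderiv ℝ (fun w => g (Fbeta p β w)) y (Pi.single k 1))
      = fun y => deriv g (Fbeta p β y) * piB p β y k := by
    funext y
    rw [(hasFDerivAt_m p β hp hβ g hg y).fderiv]
    simp [Lc_single]
  rw [hfun]
  have hS := Sb_pos p β hp z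
  have hinv : HasFDerivAt (fun y => (Sb p β y)⁻¹)
      ((-((Sb p β z) ^ 2)⁻¹) • Lc p (fun i => Real.exp (β * z i) * β)) z :=
    (hasDerivAt_inv hS.ne').comp_hasFDerivAt z (hasFDerivAt_Sb p β z)
  have hpik : HasFDerivAt (fun y => piB p β y k)
      (Real.exp (β * z k) • ((-((Sb p β z) ^ 2)⁻¹) • Lc p (fun i => Real.exp (β * z i) * β))
        + (Sb p β z)⁻¹ • ((Real.exp (β * z k) * β) •
            (ContinuousLinearMap.proj k : (Fin p → ℝ) →L[ℝ] ℝ))) z := by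
    have h := (hasFDerivAt_exp_coord p β z k).mul hinv
    have hfun2 : (fun y : Fin p → ℝ => Real.exp (β * y k) * (Sb p β y)⁻¹)
        = fun y => piB p β y k := by
      funext y; rw [show piB p β y k = Real.exp (β * y k) / Sb p β y from rfl, div_eq_mul_inv]
    rw [← hfun2]
    exact h
  have hdg1 : ContDiff ℝ 1 (deriv g) := by
    have := (contDiff_succ_iff_deriv (n := 1)).mp (by norm_num at hg ⊢; exact hg)
    exact this.2.2
  have hdg : HasFDerivAt (fun y => deriv g (Fbeta p β y))
      (deriv (deriv g) (Fbeta p β z) • Lc p (piB p β z)) z := by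
    have h2 : HasDerivAt (deriv g) (deriv (deriv g) (Fbeta p β z)) (Fbeta p β z) :=
      ((hdg1.differentiable one_ne_zero) _).hasDerivAt
    exact h2.comp_hasFDerivAt z (hasFDerivAt_F p β hp hβ z)
  have hprod := hdg.mul hpik
  rw [show (fun y => deriv g (Fbeta p β y) * piB p β y k)
      = ((fun y => deriv g (Fbeta p β y)) * fun y => piB p β y k) from rfl, hprod.fderiv]
  simp only [ContinuousLinearMap.add_apply, ContinuousLinearMap.coe_smul', Pi.smul_apply,
    Lc_single, ContinuousLinearMap.proj_apply, smul_eq_mul, Pi.single_apply]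
  have hpi : ∀ i, piB p β z i = Real.exp (β * z i) / Sb p β z := fun _ => rfl
  have hSne : Sb p β z ≠ 0 := hS.ne'
  by_cases h : j = k
  · subst h
    simp only [wB, if_pos rfl, if_true, hpi]
    field_simp
    ring
  · have h' : ¬ (k = j) := fun hh => h hh.symm
    simp only [wB, if_neg h, if_neg h', hpi]
    field_simp
    ring

lemma sum_abs_wB (hp : 1 ≤ p) (z : Fin p → ℝ) : ∑ j, ∑ k, |wB p β z j k| ≤ 2 := by
  have key : ∀ j, ∑ k, |wB p β z j k| ≤ 2 * piB p β z j := by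
    intro j
    have habs : ∀ k, |wB p β z j k| = piB p β z j * piB p β z k
        + (if j = k then piB p β z j - 2 * piB p β z j * piB p β z j else 0) := by
      intro k
      by_cases h : j = k
      · subst h
        have h0 := piB_pos p β hp z j
        have h1 := piB_le_one p β hp z j
        have hw : wB p β z j j = piB p β z j - piB p β z j * piB p β z j := by
          simp [wB]
        rw [hw, abs_of_nonneg (by nlinarith), if_pos rfl]
        ring
      · simp only [wB, if_neg h]
        rw [zero_sub, abs_neg,
          abs_of_nonneg (mul_nonneg (piB_pos p β hp z j).le (piB_pos p β hp z k).le)]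
        ring
    calc ∑ k, |wB p β z j k|
        = ∑ k, (piB p β z j * piB p β z k
            + (if j = k then piB p β z j - 2 * piB p β z j * piB p β z j else 0)) :=
          Finset.sum_congr rfl fun k _ => habs k
      _ = piB p β z j + (piB p β z j - 2 * piB p β z j * piB p β z j) := by
          rw [Finset.sum_add_distrib, ← Finset.mul_sum, sum_piB p β hp z, mul_one,
            Finset.sum_ite_eq Finset.univ j
              (fun _ => piB p β z j - 2 * piB p β z j * piB p β z j), if_pos (Finset.mem_univ j)]
      _ ≤ 2 * piB p β z j := by nlinarith [piB_pos p β hp z j]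
  calc ∑ j, ∑ k, |wB p β z j k| ≤ ∑ j, 2 * piB p β z j :=
        Finset.sum_le_sum fun j _ => key j
    _ = 2 := by rw [← Finset.mul_sum, sum_piB p β hp z, mul_one]

end main

theorem second_deriv_composition (p : ℕ) (hp : 1 ≤ p) (β : ℝ) (hβ : 0 < β)
    (g : ℝ → ℝ) (hg : ContDiff ℝ 2 g) (z : Fin p → ℝ) :
    (∀ j k : Fin p,
      fderiv ℝ (fun y => fderiv ℝ (fun w => g (Fbeta p β w)) y (Pi.single k 1)) z
          (Pi.single j 1)
        = deriv (deriv g) (Fbeta p β z) * piB p β z j * piB p β z k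
            + β * deriv g (Fbeta p β z) * wB p β z j k) ∧
    (∑ j, ∑ k, |fderiv ℝ (fun y => fderiv ℝ (fun w => g (Fbeta p β w)) y (Pi.single k 1)) z
          (Pi.single j 1)|)
      ≤ |deriv (deriv g) (Fbeta p β z)| + 2 * β * |deriv g (Fbeta p β z)| := by
  refine ⟨fun j k => second_partial p β hp hβ g hg z j k, ?_⟩
  set A := deriv (deriv g) (Fbeta p β z)
  set B := deriv g (Fbeta p β z)
  calc ∑ j, ∑ k, |fderiv ℝ (fun y => fderiv ℝ (fun w => g (Fbeta p β w)) y (Pi.single k 1)) z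
          (Pi.single j 1)|
      = ∑ j, ∑ k, |A * piB p β z j * piB p β z k + β * B * wB p β z j k| := by
        refine Finset.sum_congr rfl fun j _ => Finset.sum_congr rfl fun k _ => ?_
        rw [second_partial p β hp hβ g hg z j k]
    _ ≤ ∑ j, ∑ k, (|A| * (piB p β z j * piB p β z k) + β * |B| * |wB p β z j k|) := by
        refine Finset.sum_le_sum fun j _ => Finset.sum_le_sum fun k _ => ?_
        refine (abs_add_le _ _).trans ?_
        have h1 : |A * piB p β z j * piB p β z k| = |A| * (piB p β z j * piB p β z k) := by
          rw [abs_mul, abs_mul,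
            abs_of_nonneg (piB_pos p β hp z j).le, abs_of_nonneg (piB_pos p β hp z k).le,
            mul_assoc]
        have h2 : |β * B * wB p β z j k| = β * |B| * |wB p β z j k| := by
          rw [abs_mul, abs_mul, abs_of_pos hβ]
        rw [h1, h2]
    _ = |A| + β * |B| * (∑ j, ∑ k, |wB p β z j k|) := by
        have hrow : ∀ j : Fin p, ∑ k, (|A| * (piB p β z j * piB p β z k)
            + β * |B| * |wB p β z j k|)
            = |A| * piB p β z j + β * |B| * ∑ k, |wB p β z j k| := by
          intro j
          rw [Finset.sum_add_distrib, ← Finset.mul_sum, ← Finset.mul_sum, ← Finset.mul_sum,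
            sum_piB p β hp z, mul_one]
        simp only [hrow]
        rw [Finset.sum_add_distrib, ← Finset.mul_sum, ← Finset.mul_sum, sum_piB p β hp z,
          mul_one]
    _ ≤ |A| + 2 * β * |B| := by
        have hw := sum_abs_wB p β hp z
        have hB : 0 ≤ β * |B| := mul_nonneg hβ.le (abs_nonneg B)
        nlinarith
end

section
/- (Maximal inequality for sums of nonnegative random vectors) Let V₁,…,V_n be independent random vectors in ℝ^p with p ≥ 2 and V_{ij} ≥ 0 for all i, j. Then E[max_{1≤j≤p} ∑_{i=1}^n V_{ij}] ≤ K ( max_{1≤j≤p} E[∑_{i=1}^n V_{ij}] + E[max_{i,j} V_{ij}] · log p ) for some universal constant K. -/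
set_option maxHeartbeats 1000000
open MeasureTheory ProbabilityTheory Real

lemma meas_ciSup_fin {Ω : Type*} [MeasurableSpace Ω] {q : ℕ} {f : Fin q → Ω → ℝ}
    (hf : ∀ j, Measurable (f j)) : Measurable fun ω => ⨆ j, f j ω := by
  rcases Nat.eq_zero_or_pos q with h | h
  · subst h
    have : (fun ω => ⨆ j : Fin 0, f j ω) = fun _ => (0:ℝ) := by
      funext ω; exact Real.iSup_of_isEmpty _
    rw [this]; exact measurable_const
  · have : Nonempty (Fin q) := ⟨⟨0, h⟩⟩
    have heq : (fun ω => ⨆ j, f j ω) = Finset.univ.sup' Finset.univ_nonempty f := by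
      funext ω; rw [Finset.sup'_apply, Finset.sup'_univ_eq_ciSup]
    rw [heq]
    exact Finset.measurable_sup' Finset.univ_nonempty (fun j _ => hf j)

lemma exp_chord {s : ℝ} (h0 : 0 ≤ s) (h1 : s ≤ 1) : Real.exp s ≤ 1 + (Real.exp 1 - 1) * s := by
  have h := convexOn_exp.2 (Set.mem_univ (0:ℝ)) (Set.mem_univ (1:ℝ))
      (by linarith : (0:ℝ) ≤ 1 - s) h0 (by ring)
  simp only [smul_eq_mul, mul_zero, mul_one, zero_add, Real.exp_zero] at h
  linarith

/-- Maximal inequality for sums of independent nonnegative random vectors in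
`ℝ^p`, `p ≥ 2`, with a universal constant `K`. -/
theorem maximal_inequality_nonneg :
    ∃ K : ℝ, 0 < K ∧
      ∀ (Ω : Type) (_ : MeasurableSpace Ω) (P : Measure Ω), IsProbabilityMeasure P →
      ∀ (n p : ℕ), 2 ≤ p →
      ∀ (V : Fin n → Ω → Fin p → ℝ), (∀ i, Measurable (V i)) →
      iIndepFun V P →
      (∀ i ω j, 0 ≤ V i ω j) →
      (∫ ω, (⨆ j, ∑ i, V i ω j) ∂P)
        ≤ K * ((⨆ j, ∫ ω, ∑ i, V i ω j ∂P)
            + (∫ ω, (⨆ i, ⨆ j, V i ω j) ∂P) * Real.log p) := by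
  refine ⟨100, by norm_num, ?_⟩
  intro Ω mΩ P hP n p hp V hVmeas hVindep hVpos
  have hpne : Nonempty (Fin p) := ⟨⟨0, by omega⟩⟩
  set S : Fin p → Ω → ℝ := fun j ω => ∑ i, V i ω j with hSdef
  set Z : Ω → ℝ := fun ω => ⨆ j, S j ω with hZdef
  set Mi : Fin n → Ω → ℝ := fun i ω => ⨆ j, V i ω j with hMidef
  set Mx : Ω → ℝ := fun ω => ⨆ i, Mi i ω with hMxdef
  set L : ℝ := ⨆ j, ∫ ω, S j ω ∂P with hLdef
  set m : ℝ := ∫ ω, Mx ω ∂P with hmdef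
  show ∫ ω, Z ω ∂P ≤ 100 * (L + m * Real.log p)
  -- basic measurability
  have hVm : ∀ i j, Measurable fun ω => V i ω j :=
    fun i j => (measurable_pi_apply j).comp (hVmeas i)
  have hSm : ∀ j, Measurable (S j) := fun j => Finset.measurable_sum _ (fun i _ => hVm i j)
  have hZm : Measurable Z := meas_ciSup_fin hSm
  have hMim : ∀ i, Measurable (Mi i) := fun i => meas_ciSup_fin (hVm i)
  have hMxm : Measurable Mx := meas_ciSup_fin hMim
  -- nonnegativity
  have hSpos : ∀ j ω, 0 ≤ S j ω := fun j ω => Finset.sum_nonneg fun i _ => hVpos i ω j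
  have hZpos : ∀ ω, 0 ≤ Z ω := fun ω => Real.iSup_nonneg fun j => hSpos j ω
  have hMipos : ∀ i ω, 0 ≤ Mi i ω := fun i ω => Real.iSup_nonneg fun j => hVpos i ω j
  have hMxpos : ∀ ω, 0 ≤ Mx ω := fun ω => Real.iSup_nonneg fun i => hMipos i ω
  -- pointwise comparisons
  have hSleZ : ∀ j ω, S j ω ≤ Z ω := by
    intro j ω; simp only [hZdef]; exact le_ciSup (f := fun j' => S j' ω) (Finite.bddAbove_range _) j
  have hViMi : ∀ i ω j, V i ω j ≤ Mi i ω := by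
    intro i ω j; simp only [hMidef]; exact le_ciSup (f := fun j' => V i ω j') (Finite.bddAbove_range _) j
  have hMiMx : ∀ i ω, Mi i ω ≤ Mx ω := by
    intro i ω; simp only [hMxdef]; exact le_ciSup (f := fun i' => Mi i' ω) (Finite.bddAbove_range _) i
  have hMxZ : ∀ ω, Mx ω ≤ Z ω := by
    intro ω
    simp only [hMxdef, hZdef, hMidef]
    refine Real.iSup_le (fun i => Real.iSup_le (fun j => ?_) (hZpos ω)) (hZpos ω)
    exact le_trans (Finset.single_le_sum (fun i' _ => hVpos i' ω j) (Finset.mem_univ i))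
      (hSleZ j ω)
  -- trivial facts about RHS
  have hL0 : 0 ≤ L := by
    simp only [hLdef]; exact Real.iSup_nonneg fun j => integral_nonneg (hSpos j)
  have hm0 : 0 ≤ m := integral_nonneg hMxpos
  have hlogp : Real.log 2 ≤ Real.log p := by
    apply Real.log_le_log (by norm_num)
    exact_mod_cast hp
  have hlogp2 : (1/2 : ℝ) ≤ Real.log p := le_trans (by
    have := Real.log_two_gt_d9; linarith) hlogp
  have hlogp0 : 0 ≤ Real.log p := by linarith
  by_cases hZint : Integrable Z P
  case neg =>
    rw [integral_undef hZint]
    have : 0 ≤ m * Real.log p := mul_nonneg hm0 hlogp0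
    nlinarith
  -- main case
  have hSint : ∀ j, Integrable (S j) P := by
    intro j
    refine hZint.mono' (hSm j).aestronglyMeasurable (ae_of_all _ fun ω => ?_)
    rw [Real.norm_eq_abs, abs_of_nonneg (hSpos j ω)]; exact hSleZ j ω
  have hMxint : Integrable Mx P := by
    refine hZint.mono' hMxm.aestronglyMeasurable (ae_of_all _ fun ω => ?_)
    rw [Real.norm_eq_abs, abs_of_nonneg (hMxpos ω)]; exact hMxZ ω
  have hMiint : ∀ i, Integrable (Mi i) P := by
    intro i
    refine hMxint.mono' (hMim i).aestronglyMeasurable (ae_of_all _ fun ω => ?_)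
    rw [Real.norm_eq_abs, abs_of_nonneg (hMipos i ω)]; exact hMiMx i ω
  have hSL : ∀ j, ∫ ω, S j ω ∂P ≤ L := by
    intro j; simp only [hLdef]; exact le_ciSup (f := fun j' => ∫ ω, S j' ω ∂P) (Finite.bddAbove_range _) j
  by_cases hm : m = 0
  case neg =>
    have hm' : 0 < m := lt_of_le_of_ne hm0 (Ne.symm hm)
    set τ : ℝ := 4 * m with hτdef
    have hτ : 0 < τ := by rw [hτdef]; linarith
    set θ : ℝ := (P {ω | τ < Mx ω}).toReal with hθdef
    have hθ0 : 0 ≤ θ := ENNReal.toReal_nonneg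
    have hθ4 : θ ≤ 1/4 := by
      have hM : τ * (P {ω | τ ≤ Mx ω}).toReal ≤ m :=
        mul_meas_ge_le_integral_of_nonneg (ae_of_all _ hMxpos) hMxint τ
      have h1 : θ ≤ (P {ω | τ ≤ Mx ω}).toReal := by
        rw [hθdef]
        exact ENNReal.toReal_mono (measure_ne_top _ _)
          (measure_mono fun ω h => show τ ≤ Mx ω from le_of_lt h)
      nlinarith [ENNReal.toReal_nonneg (a := P {ω | τ ≤ Mx ω})]
    -- truncated variables
    set W : Fin n → Fin p → Ω → ℝ := fun i j ω => min (V i ω j) τ with hWdef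
    set S' : Fin p → Ω → ℝ := fun j ω => ∑ i, W i j ω with hS'def
    set U : Fin n → Ω → ℝ := fun i ω => if τ < Mi i ω then Mi i ω else 0 with hUdef
    set T : Ω → ℝ := fun ω => ∑ i, U i ω with hTdef
    have hWm : ∀ i j, Measurable (W i j) := fun i j => (hVm i j).min measurable_const
    have hWpos : ∀ i j ω, 0 ≤ W i j ω := fun i j ω => le_min (hVpos i ω j) hτ.le
    have hWle : ∀ i j ω, W i j ω ≤ τ := fun i j ω => min_le_right _ _
    have hWleV : ∀ i j ω, W i j ω ≤ V i ω j := fun i j ω => min_le_left _ _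
    have hWint : ∀ i j, Integrable (W i j) P := by
      intro i j
      refine (integrable_const τ).mono' (hWm i j).aestronglyMeasurable
        (ae_of_all _ fun ω => ?_)
      rw [Real.norm_eq_abs, abs_of_nonneg (hWpos i j ω)]; exact hWle i j ω
    have hS'm : ∀ j, Measurable (S' j) := fun j =>
      Finset.measurable_sum _ (fun i _ => hWm i j)
    have hS'pos : ∀ j ω, 0 ≤ S' j ω := fun j ω =>
      Finset.sum_nonneg fun i _ => hWpos i j ω
    have hS'le : ∀ j ω, S' j ω ≤ n * τ := by
      intro j ω
      calc S' j ω ≤ ∑ _i : Fin n, τ := Finset.sum_le_sum fun i _ => hWle i j ω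
        _ = n * τ := by simp [mul_comm]
    have hS'int : ∀ j, Integrable (S' j) P := fun j =>
      integrable_finset_sum _ (fun i _ => hWint i j)
    have hUm : ∀ i, Measurable (U i) := by
      intro i
      exact Measurable.ite (measurableSet_lt measurable_const (hMim i)) (hMim i)
        measurable_const
    have hUpos : ∀ i ω, 0 ≤ U i ω := by
      intro i ω; rw [hUdef]
      dsimp only
      split
      · exact hMipos i ω
      · exact le_refl _
    have hUleMi : ∀ i ω, U i ω ≤ Mi i ω := by
      intro i ω; rw [hUdef]
      dsimp only
      split
      · exact le_refl _
      · exact hMipos i ω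
    have hUint : ∀ i, Integrable (U i) P := by
      intro i
      refine (hMiint i).mono' (hUm i).aestronglyMeasurable (ae_of_all _ fun ω => ?_)
      rw [Real.norm_eq_abs, abs_of_nonneg (hUpos i ω)]; exact hUleMi i ω
    have hTpos : ∀ ω, 0 ≤ T ω := fun ω => Finset.sum_nonneg fun i _ => hUpos i ω
    have hTint : Integrable T P := integrable_finset_sum _ (fun i _ => hUint i)
    -- Step B : E T ≤ (4/3) m
    have hstepB : ∫ ω, T ω ∂P ≤ (4/3) * m := by
      classical
      set A : Fin n → Set Ω := fun i => {ω | ∃ k, k < i ∧ τ < Mi k ω} with hAdef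
      have hAmeas : ∀ i, MeasurableSet (A i) := by
        intro i
        have : A i = ⋃ k, ⋃ (_ : k < i), {ω | τ < Mi k ω} := by
          ext ω; simp [hAdef]
        rw [this]
        exact MeasurableSet.iUnion fun k => MeasurableSet.iUnion fun _ =>
          measurableSet_lt measurable_const (hMim k)
      set χ : Fin n → Ω → ℝ := fun i => Set.indicator (A i) (fun _ => 1) with hχdef
      have hχm : ∀ i, Measurable (χ i) := fun i => measurable_const.indicator (hAmeas i)
      have hχ01 : ∀ i ω, χ i ω = 0 ∨ χ i ω = 1 := by
        intro i ω; rw [hχdef]; dsimp only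
        rw [Set.indicator_apply]; split <;> simp
      have hχpos : ∀ i ω, 0 ≤ χ i ω := by
        intro i ω; rcases hχ01 i ω with h | h <;> rw [h] <;> norm_num
      have hχle1 : ∀ i ω, χ i ω ≤ 1 := by
        intro i ω; rcases hχ01 i ω with h | h <;> rw [h] <;> norm_num
      have hχint : ∀ i, Integrable (χ i) P := by
        intro i
        refine (integrable_const (1:ℝ)).mono' (hχm i).aestronglyMeasurable
          (ae_of_all _ fun ω => ?_)
        rw [Real.norm_eq_abs, abs_of_nonneg (hχpos i ω)]; exact hχle1 i ω
      -- independence of U i and χ i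
      have hindUχ : ∀ i, IndepFun (U i) (χ i) P := by
        intro i
        set Tf : Finset (Fin n) := Finset.univ.filter (fun k => k < i) with hTf
        have hdisj : Disjoint ({i} : Finset (Fin n)) Tf := by
          simp [Finset.disjoint_left, hTf]
        have H := hVindep.indepFun_finset {i} Tf hdisj hVmeas
        have hsupm : Measurable fun v : Fin p → ℝ => ⨆ j, v j :=
          meas_ciSup_fin (fun j => measurable_pi_apply j)
        set g : (Fin p → ℝ) → ℝ := fun v => if τ < ⨆ j, v j then ⨆ j, v j else 0 with hg
        have hgm : Measurable g :=
          Measurable.ite (measurableSet_lt measurable_const hsupm) hsupm measurable_const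
        set B : Set ((k : {x // x ∈ Tf}) → Fin p → ℝ) :=
          {y | ∃ k, τ < ⨆ j, y k j} with hB
        have hBmeas : MeasurableSet B := by
          have : B = ⋃ k, (fun y => y k) ⁻¹' {v : Fin p → ℝ | τ < ⨆ j, v j} := by
            ext y; simp [hB]
          rw [this]
          exact MeasurableSet.iUnion fun k =>
            (measurable_pi_apply k) (measurableSet_lt measurable_const hsupm)
        set φ : ((k : {x // x ∈ ({i} : Finset (Fin n))}) → Fin p → ℝ) → ℝ :=
          fun x => g (x ⟨i, Finset.mem_singleton_self i⟩) with hφ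
        set ψ : ((k : {x // x ∈ Tf}) → Fin p → ℝ) → ℝ :=
          fun x => Set.indicator B (fun _ => 1) x with hψ
        have hφm : Measurable φ := hgm.comp (measurable_pi_apply _)
        have hψm : Measurable ψ := measurable_const.indicator hBmeas
        have Hc := H.comp hφm hψm
        have h1 : (φ ∘ fun ω (k : {x // x ∈ ({i} : Finset (Fin n))}) => V k ω) = U i := by
          funext ω
          simp only [Function.comp_apply, hφ, hg, hUdef, hMidef]
        have h2 : (ψ ∘ fun ω (k : {x // x ∈ Tf}) => V k ω) = χ i := by
          funext ω
          simp only [Function.comp_apply, hψ, hχdef]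
          have hiff : ((fun (k : {x // x ∈ Tf}) => V k ω) ∈ B) ↔ (ω ∈ A i) := by
            simp only [hB, hAdef, Set.mem_setOf_eq, hMidef]
            constructor
            · rintro ⟨k, hk⟩
              exact ⟨k.1, (Finset.mem_filter.mp k.2).2, hk⟩
            · rintro ⟨k, hki, hk⟩
              exact ⟨⟨k, Finset.mem_filter.mpr ⟨Finset.mem_univ _, hki⟩⟩, hk⟩
          rw [Set.indicator_apply, Set.indicator_apply, if_congr hiff rfl rfl]
        rwa [h1, h2] at Hc
      -- decomposition
      have hUχint : ∀ i, Integrable (fun ω => U i ω * χ i ω) P := by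
        intro i
        refine (hMiint i).mono' ((hUm i).mul (hχm i)).aestronglyMeasurable
          (ae_of_all _ fun ω => ?_)
        rw [Real.norm_eq_abs, abs_of_nonneg (mul_nonneg (hUpos i ω) (hχpos i ω))]
        calc U i ω * χ i ω ≤ U i ω * 1 :=
              mul_le_mul_of_nonneg_left (hχle1 i ω) (hUpos i ω)
          _ = U i ω := mul_one _
          _ ≤ Mi i ω := hUleMi i ω
      have hUrestint : ∀ i, Integrable (fun ω => U i ω * (1 - χ i ω)) P := by
        intro i
        have : (fun ω => U i ω * (1 - χ i ω)) = fun ω => U i ω - U i ω * χ i ω := by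
          funext ω; ring
        rw [this]
        exact (hUint i).sub (hUχint i)
      -- first part : independence bound
      have hpart1 : ∀ i, ∫ ω, U i ω * χ i ω ∂P ≤ (∫ ω, U i ω ∂P) * θ := by
        intro i
        have hmul : ∫ ω, U i ω * χ i ω ∂P = (∫ ω, U i ω ∂P) * ∫ ω, χ i ω ∂P :=
          (hindUχ i).integral_fun_mul_eq_mul_integral (hUint i).aestronglyMeasurable (hχint i).aestronglyMeasurable
        rw [hmul]
        have hχeq : ∫ ω, χ i ω ∂P = (P (A i)).toReal := by
          rw [hχdef]
          exact integral_indicator_one (hAmeas i)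
        rw [hχeq]
        have hsub : A i ⊆ {ω | τ < Mx ω} := by
          rintro ω ⟨k, _, hk⟩
          exact lt_of_lt_of_le hk (hMiMx k ω)
        have : (P (A i)).toReal ≤ θ := by
          rw [hθdef]
          exact ENNReal.toReal_mono (measure_ne_top _ _) (measure_mono hsub)
        exact mul_le_mul_of_nonneg_left this (integral_nonneg (hUpos i))
      -- second part : at most one "first exceedance"
      have hpt : ∀ ω, ∑ i, U i ω * (1 - χ i ω) ≤ Mx ω := by
        intro ω
        by_cases hex : ∃ i, τ < Mi i ω
        · obtain ⟨i₁, hi₁⟩ := hex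
          set s : Finset (Fin n) := Finset.univ.filter (fun k => τ < Mi k ω) with hs
          have hsne : s.Nonempty := ⟨i₁, by simp [hs, hi₁]⟩
          set i₀ := s.min' hsne with hi₀
          have hi₀mem : i₀ ∈ s := Finset.min'_mem s hsne
          have hi₀exc : τ < Mi i₀ ω := (Finset.mem_filter.mp hi₀mem).2
          have hfirst : ∀ k, k < i₀ → ¬ τ < Mi k ω := by
            intro k hk hkexc
            exact absurd (Finset.min'_le s k (by simp [hs, hkexc])) (not_le.mpr hk)
          have hsum : ∑ i, U i ω * (1 - χ i ω) = U i₀ ω * (1 - χ i₀ ω) := by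
            apply Finset.sum_eq_single_of_mem i₀ (Finset.mem_univ _)
            intro b _ hb
            rcases lt_or_gt_of_ne hb with h | h
            · have hub : U b ω = 0 := if_neg (hfirst b h)
              rw [hub, zero_mul]
            · have hmem : ω ∈ A b := ⟨i₀, h, hi₀exc⟩
              have : χ b ω = 1 := by
                rw [hχdef]; exact Set.indicator_of_mem hmem _
              rw [this]; ring
          rw [hsum]
          have hχ0 : χ i₀ ω = 0 := by
            rw [hχdef]
            apply Set.indicator_of_notMem
            rintro ⟨k, hk, hkexc⟩
            exact hfirst k hk hkexc
          rw [hχ0, sub_zero, mul_one]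
          exact le_trans (hUleMi i₀ ω) (hMiMx i₀ ω)
        · push_neg at hex
          have hU0 : ∀ i, U i ω = 0 := fun i => if_neg (not_lt.mpr (hex i))
          simp only [hU0, zero_mul, Finset.sum_const_zero]
          exact hMxpos ω
      have hpart2 : ∑ i, ∫ ω, U i ω * (1 - χ i ω) ∂P ≤ m := by
        rw [← integral_finset_sum _ (fun i _ => hUrestint i)]
        exact integral_mono (integrable_finset_sum _ (fun i _ => hUrestint i)) hMxint hpt
      -- assemble
      have hTsum : ∫ ω, T ω ∂P = ∑ i, ∫ ω, U i ω ∂P := by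
        rw [hTdef]
        exact integral_finset_sum _ (fun i _ => hUint i)
      have hUdecomp : ∀ i, ∫ ω, U i ω ∂P
          = ∫ ω, U i ω * χ i ω ∂P + ∫ ω, U i ω * (1 - χ i ω) ∂P := by
        intro i
        rw [← integral_add (hUχint i) (hUrestint i)]
        congr 1; funext ω; ring
      have hTbound : ∫ ω, T ω ∂P ≤ θ * ∫ ω, T ω ∂P + m := by
        calc ∫ ω, T ω ∂P = ∑ i, ∫ ω, U i ω ∂P := hTsum
          _ = ∑ i, (∫ ω, U i ω * χ i ω ∂P + ∫ ω, U i ω * (1 - χ i ω) ∂P) := by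
              exact Finset.sum_congr rfl fun i _ => hUdecomp i
          _ = (∑ i, ∫ ω, U i ω * χ i ω ∂P) + ∑ i, ∫ ω, U i ω * (1 - χ i ω) ∂P :=
              Finset.sum_add_distrib
          _ ≤ (∑ i, (∫ ω, U i ω ∂P) * θ) + m :=
              add_le_add (Finset.sum_le_sum fun i _ => hpart1 i) hpart2
          _ = θ * ∑ i, ∫ ω, U i ω ∂P + m := by rw [← Finset.sum_mul]; ring
          _ = θ * ∫ ω, T ω ∂P + m := by rw [hTsum]
      have hT0 : 0 ≤ ∫ ω, T ω ∂P := integral_nonneg hTpos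
      nlinarith
    -- Step C : E sup_j S' ≤ τ log p + (e-1) L + τ
    have hsupS'm : Measurable fun ω => ⨆ j, S' j ω := meas_ciSup_fin hS'm
    have hsupS'pos : ∀ ω, 0 ≤ ⨆ j, S' j ω := fun ω => Real.iSup_nonneg fun j => hS'pos j ω
    have hsupS'int : Integrable (fun ω => ⨆ j, S' j ω) P := by
      refine (integrable_const ((n : ℝ) * τ)).mono' hsupS'm.aestronglyMeasurable
        (ae_of_all _ fun ω => ?_)
      rw [Real.norm_eq_abs, abs_of_nonneg (hsupS'pos ω)]
      exact Real.iSup_le (fun j => hS'le j ω) (by positivity)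
    have hstepC : ∫ ω, (⨆ j, S' j ω) ∂P ≤ τ * Real.log p + (Real.exp 1 - 1) * L + τ := by
      classical
      have hp0 : (0:ℝ) < p := by
        have : (2:ℝ) ≤ p := by exact_mod_cast hp
        linarith
      have he1 : (0:ℝ) ≤ Real.exp 1 - 1 := by linarith [Real.add_one_le_exp (1:ℝ)]
      have hexpWint : ∀ i j, Integrable (fun ω => Real.exp ((1/τ) * W i j ω)) P := by
        intro i j
        refine (integrable_const (Real.exp 1)).mono'
          (((hWm i j).const_mul _).exp).aestronglyMeasurable (ae_of_all _ fun ω => ?_)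
        rw [Real.norm_eq_abs, abs_of_nonneg (Real.exp_pos _).le]
        apply Real.exp_le_exp.mpr
        calc (1/τ) * W i j ω ≤ (1/τ) * τ :=
              mul_le_mul_of_nonneg_left (hWle i j ω) (by positivity)
          _ = 1 := by field_simp
      have hWchord : ∀ i j, ∫ ω, Real.exp ((1/τ) * W i j ω) ∂P
          ≤ Real.exp ((Real.exp 1 - 1) * ((1/τ) * ∫ ω, W i j ω ∂P)) := by
        intro i j
        have hint2 : Integrable (fun ω => 1 + (Real.exp 1 - 1) * ((1/τ) * W i j ω)) P :=
          (integrable_const 1).add (((hWint i j).const_mul (1/τ)).const_mul _)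
        have hmono : ∀ ω, Real.exp ((1/τ) * W i j ω)
            ≤ 1 + (Real.exp 1 - 1) * ((1/τ) * W i j ω) := by
          intro ω
          apply exp_chord
          · exact mul_nonneg (by positivity) (hWpos i j ω)
          · calc (1/τ) * W i j ω ≤ (1/τ) * τ :=
                  mul_le_mul_of_nonneg_left (hWle i j ω) (by positivity)
              _ = 1 := by field_simp
        calc ∫ ω, Real.exp ((1/τ) * W i j ω) ∂P
            ≤ ∫ ω, (1 + (Real.exp 1 - 1) * ((1/τ) * W i j ω)) ∂P :=
              integral_mono (hexpWint i j) hint2 hmono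
          _ = 1 + (Real.exp 1 - 1) * ((1/τ) * ∫ ω, W i j ω ∂P) := by
              rw [integral_add (integrable_const 1)
                  (((hWint i j).const_mul (1/τ)).const_mul _),
                integral_const, integral_const_mul, integral_const_mul]
              simp [measure_univ]
          _ ≤ Real.exp ((Real.exp 1 - 1) * ((1/τ) * ∫ ω, W i j ω ∂P)) := by
              linarith [Real.add_one_le_exp
                ((Real.exp 1 - 1) * ((1/τ) * ∫ ω, W i j ω ∂P))]
      have hmgfS' : ∀ j, ∫ ω, Real.exp ((1/τ) * S' j ω) ∂P
          ≤ Real.exp ((Real.exp 1 - 1) * ((1/τ) * L)) := by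
        intro j
        have hindW : iIndepFun (fun i => W i j) P :=
          hVindep.comp (fun i (v : Fin p → ℝ) => min (v j) τ)
            (fun i => (measurable_pi_apply j).min measurable_const)
        have hsum : mgf (∑ i, W i j) P (1/τ) = ∏ i, mgf (W i j) P (1/τ) :=
          hindW.mgf_sum (fun i => hWm i j) Finset.univ
        have heq : ∫ ω, Real.exp ((1/τ) * S' j ω) ∂P = mgf (∑ i, W i j) P (1/τ) := by
          rw [mgf]
          congr 1
          funext ω
          simp only [Finset.sum_apply]
          rfl
        rw [heq, hsum]
        have hWb : ∀ i, mgf (W i j) P (1/τ)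
            ≤ Real.exp ((Real.exp 1 - 1) * ((1/τ) * ∫ ω, W i j ω ∂P)) := by
          intro i
          rw [mgf]
          exact hWchord i j
        calc ∏ i, mgf (W i j) P (1/τ)
            ≤ ∏ i, Real.exp ((Real.exp 1 - 1) * ((1/τ) * ∫ ω, W i j ω ∂P)) :=
              Finset.prod_le_prod (fun i _ => mgf_nonneg) (fun i _ => hWb i)
          _ = Real.exp (∑ i, (Real.exp 1 - 1) * ((1/τ) * ∫ ω, W i j ω ∂P)) :=
              (Real.exp_sum _ _).symm
          _ ≤ Real.exp ((Real.exp 1 - 1) * ((1/τ) * L)) := by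
              apply Real.exp_le_exp.mpr
              have h2 : ∑ i, ∫ ω, W i j ω ∂P = ∫ ω, S' j ω ∂P :=
                (integral_finset_sum _ (fun i _ => hWint i j)).symm
              have h3 : ∫ ω, S' j ω ∂P ≤ L :=
                le_trans (integral_mono (hS'int j) (hSint j)
                  (fun ω => Finset.sum_le_sum fun i _ => hWleV i j ω)) (hSL j)
              have h1 : ∑ i, (Real.exp 1 - 1) * ((1/τ) * ∫ ω, W i j ω ∂P)
                  = (Real.exp 1 - 1) * ((1/τ) * ∫ ω, S' j ω ∂P) := by
                rw [← h2]
                simp only [Finset.mul_sum]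
              rw [h1]
              exact mul_le_mul_of_nonneg_left
                (mul_le_mul_of_nonneg_left h3 (by positivity)) he1
      set b : ℝ := Real.exp (-(Real.log p + (Real.exp 1 - 1) * ((1/τ) * L))) with hbdef
      set a : ℝ := τ * Real.log p + (Real.exp 1 - 1) * L with hadef
      have hb0 : (0:ℝ) < b := Real.exp_pos _
      have hab : ∀ x : ℝ, x - a ≤ τ * (b * Real.exp ((1/τ) * x)) := by
        intro x
        have h1 : (x - a)/τ ≤ Real.exp ((x - a)/τ) := by
          linarith [Real.add_one_le_exp ((x - a)/τ)]
        have h2 : Real.exp ((x - a)/τ) = b * Real.exp ((1/τ) * x) := by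
          rw [hbdef, ← Real.exp_add]
          congr 1
          rw [hadef]
          field_simp
          ring
        calc x - a = τ * ((x - a)/τ) := by field_simp
          _ ≤ τ * Real.exp ((x - a)/τ) := mul_le_mul_of_nonneg_left h1 hτ.le
          _ = τ * (b * Real.exp ((1/τ) * x)) := by rw [h2]
      have ha0 : 0 ≤ a := by
        rw [hadef]
        exact add_nonneg (mul_nonneg hτ.le hlogp0) (mul_nonneg he1 hL0)
      have hexpS'int : ∀ j, Integrable (fun ω => Real.exp ((1/τ) * S' j ω)) P := by
        intro j
        refine (integrable_const (Real.exp n)).mono'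
          (((hS'm j).const_mul _).exp).aestronglyMeasurable (ae_of_all _ fun ω => ?_)
        rw [Real.norm_eq_abs, abs_of_nonneg (Real.exp_pos _).le]
        apply Real.exp_le_exp.mpr
        calc (1/τ) * S' j ω ≤ (1/τ) * (n * τ) :=
              mul_le_mul_of_nonneg_left (hS'le j ω) (by positivity)
          _ = n := by field_simp
      have hptc : ∀ ω, (⨆ j, S' j ω) ≤ a + ∑ j, τ * (b * Real.exp ((1/τ) * S' j ω)) := by
        intro ω
        have hterm : ∀ k : Fin p, 0 ≤ τ * (b * Real.exp ((1/τ) * S' k ω)) := by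
          intro k; positivity
        refine Real.iSup_le (fun j => ?_) ?_
        · have h1 := hab (S' j ω)
          have h2 : τ * (b * Real.exp ((1/τ) * S' j ω))
              ≤ ∑ k, τ * (b * Real.exp ((1/τ) * S' k ω)) :=
            Finset.single_le_sum (fun k _ => hterm k) (Finset.mem_univ j)
          linarith
        · have := Finset.sum_nonneg (fun k (_ : k ∈ Finset.univ) => hterm k)
          linarith
      have hsumint : Integrable (fun ω => ∑ j, τ * (b * Real.exp ((1/τ) * S' j ω))) P :=
        integrable_finset_sum _ fun j _ => (((hexpS'int j).const_mul b).const_mul τ)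
      have hmain : ∫ ω, (⨆ j, S' j ω) ∂P
          ≤ a + ∑ j, τ * (b * ∫ ω, Real.exp ((1/τ) * S' j ω) ∂P) := by
        calc ∫ ω, (⨆ j, S' j ω) ∂P
            ≤ ∫ ω, (a + ∑ j, τ * (b * Real.exp ((1/τ) * S' j ω))) ∂P :=
              integral_mono hsupS'int ((integrable_const a).add hsumint) hptc
          _ = a + ∑ j, τ * (b * ∫ ω, Real.exp ((1/τ) * S' j ω) ∂P) := by
              rw [integral_add (integrable_const a) hsumint, integral_const,
                integral_finset_sum _ (fun j _ => (((hexpS'int j).const_mul b).const_mul τ))]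
              simp only [measure_univ, ENNReal.toReal_one, probReal_univ, smul_eq_mul, one_mul]
              congr 1
              refine Finset.sum_congr rfl fun j _ => ?_
              rw [integral_const_mul, integral_const_mul]
      have hconst : b * Real.exp ((Real.exp 1 - 1) * ((1/τ) * L)) = 1 / p := by
        rw [hbdef, ← Real.exp_add]
        have : -(Real.log p + (Real.exp 1 - 1) * ((1/τ) * L))
            + (Real.exp 1 - 1) * ((1/τ) * L) = -(Real.log p) := by ring
        rw [this, Real.exp_neg, Real.exp_log hp0, one_div]
      have hfinal : ∑ j : Fin p, τ * (b * ∫ ω, Real.exp ((1/τ) * S' j ω) ∂P) ≤ τ := by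
        calc ∑ j : Fin p, τ * (b * ∫ ω, Real.exp ((1/τ) * S' j ω) ∂P)
            ≤ ∑ _j : Fin p, τ * (b * Real.exp ((Real.exp 1 - 1) * ((1/τ) * L))) :=
              Finset.sum_le_sum fun j _ =>
                mul_le_mul_of_nonneg_left
                  (mul_le_mul_of_nonneg_left (hmgfS' j) hb0.le) hτ.le
          _ = p * (τ * (b * Real.exp ((Real.exp 1 - 1) * ((1/τ) * L)))) := by
              rw [Finset.sum_const, Finset.card_univ, Fintype.card_fin, nsmul_eq_mul]
          _ = τ := by
              rw [hconst]
              field_simp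
      have : ∫ ω, (⨆ j, S' j ω) ∂P ≤ a + τ := le_trans hmain (by linarith)
      rw [hadef] at this
      linarith
    -- pointwise splitting
    have hsplit : ∀ ω, Z ω ≤ (⨆ j, S' j ω) + T ω := by
      intro ω
      rw [hZdef]
      refine Real.iSup_le (fun j => ?_) (add_nonneg (hsupS'pos ω) (hTpos ω))
      have h1 : S j ω ≤ S' j ω + T ω := by
        rw [hSdef, hS'def, hTdef]
        dsimp only
        rw [← Finset.sum_add_distrib]
        refine Finset.sum_le_sum fun i _ => ?_
        by_cases hv : V i ω j ≤ τ
        · have : W i j ω = V i ω j := min_eq_left hv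
          have := hUpos i ω
          rw [hWdef]
          dsimp only
          rw [min_eq_left hv]
          linarith [hUpos i ω]
        · push_neg at hv
          have hWv : W i j ω = τ := min_eq_right hv.le
          have hUv : U i ω = Mi i ω := if_pos (lt_of_lt_of_le hv (hViMi i ω j))
          rw [hWdef]
          dsimp only
          rw [min_eq_right hv.le]
          have h3 : V i ω j ≤ Mi i ω := hViMi i ω j
          rw [hUdef]
          dsimp only
          rw [if_pos (lt_of_lt_of_le hv (hViMi i ω j))]
          linarith
      exact le_trans h1 (add_le_add_left
        (le_ciSup (f := fun j' => S' j' ω) (Finite.bddAbove_range _) j) _)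
    have hint2 : ∫ ω, Z ω ∂P ≤ ∫ ω, ((⨆ j, S' j ω) + T ω) ∂P :=
      integral_mono hZint (hsupS'int.add hTint) hsplit
    rw [integral_add hsupS'int hTint] at hint2
    -- combine
    have hexp1 : Real.exp 1 ≤ 3 := by
      have := Real.exp_one_lt_d9; linarith
    have hfin : ∫ ω, Z ω ∂P ≤ 2 * L + (16 : ℝ) * (m * Real.log p) := by
      have h1 : ∫ ω, Z ω ∂P ≤ (τ * Real.log p + (Real.exp 1 - 1) * L + τ) + (4/3) * m := by
        linarith
      rw [hτdef] at h1
      have h2 : m ≤ 2 * (m * Real.log p) := by nlinarith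
      nlinarith [Real.exp_pos 1]
    have h3 : 0 ≤ m * Real.log p := mul_nonneg hm0 hlogp0
    nlinarith
  -- degenerate case m = 0
  have hMx0 : Mx =ᵐ[P] 0 := by
    have := (integral_eq_zero_iff_of_nonneg (fun ω => hMxpos ω) hMxint).mp hm
    exact this
  have hZ0 : Z =ᵐ[P] 0 := by
    filter_upwards [hMx0] with ω hω
    have hV0 : ∀ i j, V i ω j = 0 := by
      intro i j
      have h1 : V i ω j ≤ Mx ω := le_trans (hViMi i ω j) (hMiMx i ω)
      have : Mx ω = 0 := hω
      exact le_antisymm (by rw [← this] at *; linarith) (hVpos i ω j)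
    have : ∀ j, S j ω = 0 := fun j => Finset.sum_eq_zero fun i _ => hV0 i j
    show Z ω = 0
    simp only [hZdef]
    rw [show (fun j => S j ω) = fun _ => (0:ℝ) from funext this, ciSup_const]
  rw [integral_congr_ae hZ0]
  simp only [Pi.zero_apply, integral_zero]
  have : 0 ≤ m * Real.log p := mul_nonneg hm0 hlogp0
  nlinarith
end

section
/- (Maximal inequality for centered sums) Let Z₁,…,Z_n be independent random vectors in ℝ^p with p ≥ 2, M = max_{i,j} |Z_{ij}| and σ² = max_{1≤j≤p} ∑_{i=1}^n E[Z_{ij}²]. Then E[max_{1≤j≤p} |∑_{i=1}^n (Z_{ij} − E[Z_{ij}])|] ≤ K (σ √(log p) + √(E[M²]) · log p) for some universal constant K. -/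
open MeasureTheory ProbabilityTheory Real

section AuxLemmas
open Finset


lemma my_exp_le_one_add_sq {x : ℝ} (hx : x ≤ 1) : Real.exp x ≤ 1 + x + x ^ 2 := by
  rcases le_or_gt (-1) x with h | h
  · have hb := Real.exp_bound (x := x) (by rw [abs_le]; exact ⟨h, hx⟩) (n := 2) (by norm_num)
    have h2 : ∑ i ∈ Finset.range 2, x ^ i / (Nat.factorial i) = 1 + x := by
      simp [Finset.sum_range_succ, Nat.factorial]
    rw [h2] at hb
    have h3 : |x| ^ 2 = x ^ 2 := sq_abs x
    have h4 := (abs_le.1 hb).2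
    rw [h3] at h4
    have hfac : ((2:ℕ).factorial : ℝ) = 2 := by norm_num [Nat.factorial]
    rw [hfac] at h4
    norm_num at h4
    nlinarith [sq_nonneg x]
  · have h1 : Real.exp x < 1 := Real.exp_lt_one_iff.2 (by linarith)
    nlinarith [sq_nonneg x]

section prob
variable {Ω : Type} [MeasurableSpace Ω] {P : Measure Ω}

lemma my_ciSup_eq_sup' {p : ℕ} [Nonempty (Fin p)] (f : Fin p → ℝ) :
    (⨆ j, f j) = Finset.univ.sup' Finset.univ_nonempty f := by
  refine le_antisymm (ciSup_le fun j => Finset.le_sup' f (Finset.mem_univ j))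
    (Finset.sup'_le _ _ fun j _ => le_ciSup (Set.Finite.bddAbove (Set.finite_range f)) j)

lemma my_measurable_ciSup {p : ℕ} {f : Fin p → Ω → ℝ} (hf : ∀ j, Measurable (f j)) :
    Measurable (fun ω => ⨆ j, f j ω) := by
  rcases Nat.eq_zero_or_pos p with hp | hp
  · subst hp
    have : (fun ω => ⨆ j, f j ω) = fun _ => (0:ℝ) := by
      funext ω; exact Real.iSup_of_isEmpty _
    rw [this]; exact measurable_const
  · haveI : Nonempty (Fin p) := ⟨⟨0, hp⟩⟩
    have h := Finset.measurable_sup' (Finset.univ_nonempty (α := Fin p)) (fun j _ => hf j)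
    have heq : (fun ω => ⨆ j, f j ω) = Finset.univ.sup' Finset.univ_nonempty f := by
      funext ω
      rw [my_ciSup_eq_sup' (fun j => f j ω), Finset.sup'_apply]
    rw [heq]; exact h

lemma my_ciSup_le_sum {p : ℕ} (f : Fin p → ℝ) (h0 : ∀ j, 0 ≤ f j) : (⨆ j, f j) ≤ ∑ j, f j := by
  rcases Nat.eq_zero_or_pos p with hp | hp
  · subst hp; simp [Real.iSup_of_isEmpty]
  · haveI : Nonempty (Fin p) := ⟨⟨0, hp⟩⟩
    exact ciSup_le fun j => Finset.single_le_sum (fun k _ => h0 k) (Finset.mem_univ j)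

lemma my_exists_eq_ciSup {p : ℕ} [Nonempty (Fin p)] (f : Fin p → ℝ) :
    ∃ j₀, (⨆ j, f j) = f j₀ := by
  obtain ⟨j₀, hj₀⟩ := Finite.exists_max f
  exact ⟨j₀, le_antisymm (ciSup_le hj₀) (le_ciSup (Set.Finite.bddAbove (Set.finite_range f)) j₀)⟩

lemma my_sq_ciSup_abs_le {p : ℕ} (f : Fin p → ℝ) : (⨆ j, |f j|) ^ 2 ≤ ∑ j, (f j) ^ 2 := by
  rcases Nat.eq_zero_or_pos p with hp | hp
  · subst hp
    simp [Real.iSup_of_isEmpty]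
  · haveI : Nonempty (Fin p) := ⟨⟨0, hp⟩⟩
    obtain ⟨j₀, hj₀⟩ := my_exists_eq_ciSup (fun j => |f j|)
    rw [hj₀, sq_abs]
    exact Finset.single_le_sum (fun k _ => sq_nonneg (f k)) (Finset.mem_univ j₀)

lemma my_integrable_of_bound [IsFiniteMeasure P] {f : Ω → ℝ} (hf : AEStronglyMeasurable f P)
    (C : ℝ) (h : ∀ ω, |f ω| ≤ C) : Integrable f P :=
  Integrable.mono' (integrable_const C) hf (Filter.Eventually.of_forall h)

lemma my_integrable_of_sq [IsFiniteMeasure P] {f : Ω → ℝ} (hf : AEStronglyMeasurable f P)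
    (hnn : ∀ ω, 0 ≤ f ω) (h2 : Integrable (fun ω => (f ω) ^ 2) P) : Integrable f P := by
  refine Integrable.mono' ((h2.add (integrable_const 1)).div_const 2) hf
    (Filter.Eventually.of_forall fun ω => ?_)
  rw [Real.norm_eq_abs, abs_of_nonneg (hnn ω)]
  have := sq_nonneg (f ω - 1)
  simp only [Pi.add_apply, Pi.div_apply]
  nlinarith

lemma my_integrable_ciSup [IsFiniteMeasure P] {p : ℕ} {f : Fin p → Ω → ℝ}
    (hmeas : ∀ j, Measurable (f j)) (hnn : ∀ j ω, 0 ≤ f j ω)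
    (hint : ∀ j, Integrable (f j) P) :
    Integrable (fun ω => ⨆ j, f j ω) P := by
  refine Integrable.mono' (integrable_finset_sum Finset.univ fun j _ => hint j)
    (my_measurable_ciSup hmeas).aestronglyMeasurable
    (Filter.Eventually.of_forall fun ω => ?_)
  rw [Real.norm_eq_abs, abs_of_nonneg (Real.iSup_nonneg fun j => hnn j ω)]
  exact my_ciSup_le_sum _ fun j => hnn j ω

end prob

lemma my_abs_integral {Ω : Type} [MeasurableSpace Ω] {P : Measure Ω} (f : Ω → ℝ) :
    |∫ ω, f ω ∂P| ≤ ∫ ω, |f ω| ∂P := by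
  simpa [Real.norm_eq_abs] using norm_integral_le_integral_norm (μ := P) f

section prob
variable {Ω : Type} [MeasurableSpace Ω] {P : Measure Ω}

lemma my_integrable_of_bound' [IsFiniteMeasure P] {f : Ω → ℝ} (hf : AEStronglyMeasurable f P)
    (C : ℝ) (h : ∀ ω, |f ω| ≤ C) : Integrable f P :=
  Integrable.mono' (integrable_const C) hf (Filter.Eventually.of_forall (by simpa using h))

lemma my_mgf_bound [IsProbabilityMeasure P] {X : Ω → ℝ} (hX : Measurable X)
    {c t : ℝ} (hb : ∀ ω, |X ω| ≤ c) (h0 : ∫ ω, X ω ∂P = 0) (ht : 0 ≤ t) (htc : t * c ≤ 1) :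
    ∫ ω, Real.exp (t * X ω) ∂P ≤ Real.exp (t ^ 2 * ∫ ω, (X ω) ^ 2 ∂P) := by
  have hXint : Integrable X P := my_integrable_of_bound' hX.aestronglyMeasurable c hb
  have hX2int : Integrable (fun ω => (X ω) ^ 2) P := by
    refine my_integrable_of_bound' (hX.pow_const 2).aestronglyMeasurable (c ^ 2) fun ω => ?_
    rw [abs_pow]
    exact pow_le_pow_left₀ (abs_nonneg _) (hb ω) 2
  have hexpint : Integrable (fun ω => Real.exp (t * X ω)) P := by
    refine my_integrable_of_bound' ((hX.const_mul t).exp).aestronglyMeasurable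
      (Real.exp (t * c)) fun ω => ?_
    rw [abs_of_nonneg (Real.exp_nonneg _)]
    exact Real.exp_le_exp.2 (by nlinarith [hb ω, abs_nonneg (X ω), (abs_le.1 (hb ω)).2])
  have hpt : ∀ ω, Real.exp (t * X ω) ≤ 1 + t * X ω + t ^ 2 * (X ω) ^ 2 := by
    intro ω
    have h1 : t * X ω ≤ 1 := by nlinarith [(abs_le.1 (hb ω)).2, abs_nonneg (X ω)]
    have := my_exp_le_one_add_sq h1
    calc Real.exp (t * X ω) ≤ 1 + t * X ω + (t * X ω) ^ 2 := this
      _ = 1 + t * X ω + t ^ 2 * (X ω) ^ 2 := by ring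
  calc ∫ ω, Real.exp (t * X ω) ∂P
      ≤ ∫ ω, (1 + t * X ω + t ^ 2 * (X ω) ^ 2) ∂P := by
        refine integral_mono hexpint ?_ hpt
        exact ((integrable_const 1).add (hXint.const_mul t)).add (hX2int.const_mul (t ^ 2))
    _ = 1 + t ^ 2 * ∫ ω, (X ω) ^ 2 ∂P := by
        have hadd1 : Integrable (fun ω => 1 + t * X ω) P :=
          (integrable_const 1).add (hXint.const_mul t)
        have hadd2 : Integrable (fun ω => t ^ 2 * (X ω) ^ 2) P := hX2int.const_mul (t ^ 2)
        rw [integral_add hadd1 hadd2, integral_add (integrable_const 1) (hXint.const_mul t),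
          integral_const, integral_const_mul, integral_const_mul, h0]
        simp
    _ ≤ Real.exp (t ^ 2 * ∫ ω, (X ω) ^ 2 ∂P) := by
        have := Real.add_one_le_exp (t ^ 2 * ∫ ω, (X ω) ^ 2 ∂P)
        linarith

end prob

lemma my_bdd_max_ineq {Ω : Type} [MeasurableSpace Ω] {P : Measure Ω} [IsProbabilityMeasure P]
    {n p : ℕ} (hp : 0 < p) (Y : Fin n → Ω → Fin p → ℝ)
    (hmeas : ∀ i, Measurable (Y i))
    (hindep : iIndepFun Y P)
    {c : ℝ} (hb : ∀ i ω j, |Y i ω j| ≤ c)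
    (hcent : ∀ i j, ∫ ω, Y i ω j ∂P = 0)
    {V : ℝ} (hV : ∀ j, ∑ i, ∫ ω, (Y i ω j) ^ 2 ∂P ≤ V)
    {t : ℝ} (ht : 0 < t) (htc : t * c ≤ 1) :
    ∫ ω, (⨆ j, |∑ i, Y i ω j|) ∂P ≤ (Real.log (2 * p) + t ^ 2 * V) / t := by
  haveI : Nonempty (Fin p) := ⟨⟨0, hp⟩⟩
  have hYm : ∀ i j, Measurable fun ω => Y i ω j := fun i j =>
    (measurable_pi_apply j).comp (hmeas i)
  have hSm : ∀ j, Measurable fun ω => ∑ i, Y i ω j := fun j =>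
    Finset.measurable_sum Finset.univ (fun i _ => hYm i j)
  -- mgf bound for each coordinate and sign
  have hmgf : ∀ (j : Fin p) (s : ℝ), s = 1 ∨ s = -1 →
      ∫ ω, Real.exp (t * (s * ∑ i, Y i ω j)) ∂P ≤ Real.exp (t ^ 2 * V) := by
    intro j s hs
    have hs1 : |s| = 1 := by rcases hs with h | h <;> simp [h]
    have hs2 : s ^ 2 = 1 := by rcases hs with h | h <;> simp [h]
    set X : Fin n → Ω → ℝ := fun i ω => s * Y i ω j with hX
    have hXm : ∀ i, Measurable (X i) := fun i => (hYm i j).const_mul s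
    have hXindep : iIndepFun X P :=
      hindep.comp (fun i v => s * v j) (fun i => by fun_prop)
    have e1 : ∫ ω, Real.exp (t * (s * ∑ i, Y i ω j)) ∂P = mgf (∑ i, X i) P t := by
      simp only [mgf]
      refine integral_congr_ae (Filter.EventuallyEq.of_eq (funext fun ω => ?_))
      rw [Finset.sum_apply, Finset.mul_sum]
    have e2 : mgf (∑ i, X i) P t = ∏ i, mgf (X i) P t := hXindep.mgf_sum hXm Finset.univ
    have e3 : ∀ i : Fin n, mgf (X i) P t ≤ Real.exp (t ^ 2 * ∫ ω, (Y i ω j) ^ 2 ∂P) := by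
      intro i
      have hbX : ∀ ω, |X i ω| ≤ c := fun ω => by
        rw [hX]; simp only [abs_mul, hs1, one_mul]; exact hb i ω j
      have h0X : ∫ ω, X i ω ∂P = 0 := by
        rw [hX]; simp only; rw [integral_const_mul, hcent i j, mul_zero]
      have hsq : ∀ ω, (X i ω) ^ 2 = (Y i ω j) ^ 2 := fun ω => by
        rw [hX]; simp only [mul_pow, hs2, one_mul]
      have := my_mgf_bound (P := P) (hXm i) hbX h0X ht.le htc
      simp only [hsq] at this
      exact this
    have e4 : (∏ i, mgf (X i) P t) ≤ Real.exp (t ^ 2 * V) := by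
      calc (∏ i, mgf (X i) P t) ≤ ∏ i, Real.exp (t ^ 2 * ∫ ω, (Y i ω j) ^ 2 ∂P) :=
            Finset.prod_le_prod (fun i _ => mgf_nonneg) (fun i _ => e3 i)
        _ = Real.exp (∑ i, t ^ 2 * ∫ ω, (Y i ω j) ^ 2 ∂P) := by rw [Real.exp_sum]
        _ ≤ Real.exp (t ^ 2 * V) := by
            rw [← Finset.mul_sum]
            exact Real.exp_le_exp.2 (mul_le_mul_of_nonneg_left (hV j) (sq_nonneg t))
    rw [e1, e2]; exact e4
  -- the max functional
  set F : Ω → ℝ := fun ω => ⨆ j, |∑ i, Y i ω j| with hF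
  have hFnn : ∀ ω, 0 ≤ F ω := fun ω => Real.iSup_nonneg (fun j => abs_nonneg _)
  have hFm : Measurable F := my_measurable_ciSup (fun j => (hSm j).abs)
  have hSb : ∀ ω j, |∑ i, Y i ω j| ≤ n * c := by
    intro ω j
    calc |∑ i, Y i ω j| ≤ ∑ i, |Y i ω j| := Finset.abs_sum_le_sum_abs _ _
      _ ≤ ∑ _i : Fin n, c := Finset.sum_le_sum (fun i _ => hb i ω j)
      _ = n * c := by rw [Finset.sum_const, Finset.card_univ, Fintype.card_fin, nsmul_eq_mul]
  have hFb : ∀ ω, |F ω| ≤ n * c := by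
    intro ω
    rw [abs_of_nonneg (hFnn ω)]
    exact ciSup_le (fun j => hSb ω j)
  have hFint : Integrable F P := my_integrable_of_bound hFm.aestronglyMeasurable _ hFb
  have hexpSint : ∀ (j : Fin p) (s : ℝ), |s| = 1 →
      Integrable (fun ω => Real.exp (t * (s * ∑ i, Y i ω j))) P := by
    intro j s hs1
    refine my_integrable_of_bound (((hSm j).const_mul s).const_mul t).exp.aestronglyMeasurable
      (Real.exp (t * (n * c))) fun ω => ?_
    rw [abs_of_nonneg (Real.exp_nonneg _)]
    refine Real.exp_le_exp.2 (mul_le_mul_of_nonneg_left ?_ ht.le)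
    calc s * ∑ i, Y i ω j ≤ |s * ∑ i, Y i ω j| := le_abs_self _
      _ = |∑ i, Y i ω j| := by rw [abs_mul, hs1, one_mul]
      _ ≤ n * c := hSb ω j
  set G : Ω → ℝ := fun ω => ∑ j, (Real.exp (t * (1 * ∑ i, Y i ω j))
      + Real.exp (t * (-1 * ∑ i, Y i ω j))) with hG
  have hGint : Integrable G P := integrable_finset_sum _ (fun j _ =>
    (hexpSint j 1 (by norm_num)).add (hexpSint j (-1) (by norm_num)))
  have hexpFint : Integrable (fun ω => Real.exp (t * F ω)) P := by
    refine my_integrable_of_bound ((hFm.const_mul t).exp).aestronglyMeasurable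
      (Real.exp (t * (n * c))) fun ω => ?_
    rw [abs_of_nonneg (Real.exp_nonneg _)]
    exact Real.exp_le_exp.2 (mul_le_mul_of_nonneg_left (le_trans (le_abs_self _) (hFb ω)) ht.le)
  have hFG : ∀ ω, Real.exp (t * F ω) ≤ G ω := by
    intro ω
    obtain ⟨j₀, hj₀⟩ := my_exists_eq_ciSup (fun j => |∑ i, Y i ω j|)
    have key : Real.exp (t * F ω) ≤ Real.exp (t * (1 * ∑ i, Y i ω j₀))
        + Real.exp (t * (-1 * ∑ i, Y i ω j₀)) := by
      rw [hF]; simp only; rw [hj₀]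
      rcases abs_cases (∑ i, Y i ω j₀) with ⟨h1, _⟩ | ⟨h1, _⟩
      · rw [h1]
        calc Real.exp (t * ∑ i, Y i ω j₀) = Real.exp (t * (1 * ∑ i, Y i ω j₀)) := by rw [one_mul]
          _ ≤ _ := le_add_of_nonneg_right (Real.exp_nonneg _)
      · rw [h1]
        calc Real.exp (t * -∑ i, Y i ω j₀) = Real.exp (t * (-1 * ∑ i, Y i ω j₀)) := by
              rw [neg_one_mul]
          _ ≤ _ := le_add_of_nonneg_left (Real.exp_nonneg _)
    refine le_trans key ?_
    exact Finset.single_le_sum (f := fun j => Real.exp (t * (1 * ∑ i, Y i ω j))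
      + Real.exp (t * (-1 * ∑ i, Y i ω j)))
      (fun k _ => by positivity) (Finset.mem_univ j₀)
  have hjensen : Real.exp (t * ∫ ω, F ω ∂P) ≤ ∫ ω, Real.exp (t * F ω) ∂P := by
    have := ConvexOn.map_integral_le (μ := P) (s := Set.univ) (f := fun ω => t * F ω)
      (g := Real.exp) convexOn_exp Real.continuous_exp.continuousOn isClosed_univ
      (Filter.Eventually.of_forall fun ω => Set.mem_univ _) (hFint.const_mul t)
      (by exact hexpFint)
    rwa [integral_const_mul] at this
  have hGbound : ∫ ω, G ω ∂P ≤ (2 * p) * Real.exp (t ^ 2 * V) := by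
    have e5 : ∫ ω, G ω ∂P = ∑ j, ((∫ ω, Real.exp (t * (1 * ∑ i, Y i ω j)) ∂P)
        + ∫ ω, Real.exp (t * (-1 * ∑ i, Y i ω j)) ∂P) := by
      have hj : ∀ j : Fin p, Integrable (fun ω => Real.exp (t * (1 * ∑ i, Y i ω j))
          + Real.exp (t * (-1 * ∑ i, Y i ω j))) P := fun j =>
        (hexpSint j 1 (by norm_num)).add (hexpSint j (-1) (by norm_num))
      rw [hG]
      rw [integral_finset_sum _ (fun j (_ : j ∈ Finset.univ) => hj j)]
      exact Finset.sum_congr rfl (fun j _ => integral_add (hexpSint j 1 (by norm_num))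
        (hexpSint j (-1) (by norm_num)))
    rw [e5]
    calc ∑ j, ((∫ ω, Real.exp (t * (1 * ∑ i, Y i ω j)) ∂P)
          + ∫ ω, Real.exp (t * (-1 * ∑ i, Y i ω j)) ∂P)
        ≤ ∑ _j : Fin p, (Real.exp (t ^ 2 * V) + Real.exp (t ^ 2 * V)) :=
          Finset.sum_le_sum (fun j _ => add_le_add (hmgf j 1 (Or.inl rfl))
            (hmgf j (-1) (Or.inr rfl)))
      _ = (2 * p) * Real.exp (t ^ 2 * V) := by
          rw [Finset.sum_const, Finset.card_univ, Fintype.card_fin, nsmul_eq_mul]; ring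
  have hfinal : Real.exp (t * ∫ ω, F ω ∂P) ≤ (2 * p) * Real.exp (t ^ 2 * V) :=
    le_trans hjensen (le_trans (integral_mono hexpFint hGint hFG) hGbound)
  have hppos : (0:ℝ) < 2 * p := by positivity
  have hlog : t * ∫ ω, F ω ∂P ≤ Real.log (2 * p) + t ^ 2 * V := by
    have h := (Real.le_log_iff_exp_le (by positivity)).2 hfinal
    rwa [Real.log_mul (ne_of_gt hppos) (ne_of_gt (Real.exp_pos _)), Real.log_exp] at h
  rw [le_div_iff₀ ht]
  linarith [hlog]

lemma my_tail_sum_le {Ω : Type} [MeasurableSpace Ω] {P : Measure Ω} [IsProbabilityMeasure P]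
    {n : ℕ} (W : Fin n → Ω → ℝ) (hmeas : ∀ i, Measurable (W i))
    (hindep : iIndepFun W P)
    (hnn : ∀ i ω, 0 ≤ W i ω) (hint : ∀ i, Integrable (W i) P)
    {τ : ℝ}
    (hhalf : (1:ℝ)/2 ≤ (P {ω | ∀ i, W i ω ≤ τ}).toReal) :
    ∑ i, ∫ ω, (if τ < W i ω then W i ω else 0) ∂P
      ≤ 2 * ∫ ω, (if τ < ⨆ i, W i ω then (⨆ i, W i ω) else 0) ∂P := by
  classical
  set f : Fin n → Ω → ℝ := fun i ω => if τ < W i ω then W i ω else 0 with hf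
  set g : Fin n → Ω → ℝ := fun i ω => if (∀ k, k ≠ i → W k ω ≤ τ) then 1 else 0 with hg
  set Msup : Ω → ℝ := fun ω => ⨆ i, W i ω with hMsup
  have hfm : ∀ i, Measurable (f i) := fun i =>
    Measurable.ite (measurableSet_lt measurable_const (hmeas i)) (hmeas i) measurable_const
  have hfnn : ∀ i ω, 0 ≤ f i ω := by
    intro i ω; rw [hf]; dsimp only; split_ifs with h
    · exact hnn i ω
    · exact le_refl 0
  have hfleW : ∀ i ω, f i ω ≤ W i ω := by
    intro i ω; rw [hf]; dsimp only; split_ifs with h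
    · exact le_refl _
    · exact hnn i ω
  have hfint : ∀ i, Integrable (f i) P := by
    intro i
    refine Integrable.mono' (hint i) (hfm i).aestronglyMeasurable
      (Filter.Eventually.of_forall fun ω => ?_)
    rw [Real.norm_eq_abs, abs_of_nonneg (hfnn i ω)]
    exact hfleW i ω
  have hAim : ∀ i : Fin n, MeasurableSet {ω | ∀ k, k ≠ i → W k ω ≤ τ} := by
    intro i
    have he : {ω | ∀ k, k ≠ i → W k ω ≤ τ} = ⋂ k, {ω | k ≠ i → W k ω ≤ τ} := by
      ext ω; simp [Set.mem_iInter]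
    rw [he]
    refine MeasurableSet.iInter fun k => ?_
    by_cases hk : k = i
    · have : {ω | k ≠ i → W k ω ≤ τ} = Set.univ := by ext ω; simp [hk]
      rw [this]; exact MeasurableSet.univ
    · have : {ω | k ≠ i → W k ω ≤ τ} = {ω | W k ω ≤ τ} := by ext ω; simp [hk]
      rw [this]; exact measurableSet_le (hmeas k) measurable_const
  have hgm : ∀ i, Measurable (g i) := fun i =>
    Measurable.ite (hAim i) measurable_const measurable_const
  have hgnn : ∀ i ω, 0 ≤ g i ω := by
    intro i ω; rw [hg]; dsimp only; split_ifs <;> norm_num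
  have hgle1 : ∀ i ω, g i ω ≤ 1 := by
    intro i ω; rw [hg]; dsimp only; split_ifs <;> norm_num
  -- independence of f i and g i
  have hindep2 : ∀ i, IndepFun (f i) (g i) P := by
    intro i
    have hdisj : Disjoint ({i} : Finset (Fin n)) ({i}ᶜ) := disjoint_compl_right
    have h0 := hindep.indepFun_finset {i} ({i}ᶜ) hdisj hmeas
    have hi : i ∈ ({i} : Finset (Fin n)) := Finset.mem_singleton_self i
    set φ : (({i} : Finset (Fin n)) → ℝ) → ℝ :=
      fun v => if τ < v ⟨i, hi⟩ then v ⟨i, hi⟩ else 0 with hφ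
    set ψ : ((({i}ᶜ : Finset (Fin n)) : Finset (Fin n)) → ℝ) → ℝ :=
      fun v => if (∀ k, v k ≤ τ) then 1 else 0 with hψ
    have hφm : Measurable φ := by
      refine Measurable.ite (measurableSet_lt measurable_const (measurable_pi_apply _))
        (measurable_pi_apply _) measurable_const
    have hψm : Measurable ψ := by
      have hB : MeasurableSet {v : (({i}ᶜ : Finset (Fin n)) : Finset (Fin n)) → ℝ |
          ∀ k, v k ≤ τ} := by
        have he : {v : (({i}ᶜ : Finset (Fin n)) : Finset (Fin n)) → ℝ | ∀ k, v k ≤ τ}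
            = ⋂ k, {v | v k ≤ τ} := by ext v; simp [Set.mem_iInter]
        rw [he]
        exact MeasurableSet.iInter fun k =>
          measurableSet_le (measurable_pi_apply k) measurable_const
      exact Measurable.ite hB measurable_const measurable_const
    have hcomp := h0.comp hφm hψm
    have e1 : (φ ∘ fun a (k : ({i} : Finset (Fin n))) => W k a) = f i := by
      funext ω; rfl
    have e2 : (ψ ∘ fun a (k : (({i}ᶜ : Finset (Fin n)) : Finset (Fin n))) => W k a) = g i := by
      funext ω
      simp only [Function.comp_apply, hψ, hg]
      refine if_congr ?_ rfl rfl
      constructor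
      · intro h k hk
        exact h ⟨k, by simpa [Finset.mem_compl, Finset.mem_singleton] using hk⟩
      · rintro h ⟨k, hk⟩
        exact h k (by simpa [Finset.mem_compl, Finset.mem_singleton] using hk)
    rw [e1, e2] at hcomp
    exact hcomp
  -- each expectation bound
  have key1 : ∀ i, ∫ ω, f i ω ∂P ≤ 2 * ∫ ω, f i ω * g i ω ∂P := by
    intro i
    have hgind : g i = Set.indicator {ω | ∀ k, k ≠ i → W k ω ≤ τ} (1 : Ω → ℝ) := by
      funext ω
      rw [Set.indicator_apply]
      simp only [Set.mem_setOf_eq, Pi.one_apply, hg]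
    have hgint : ∫ ω, g i ω ∂P = (P {ω | ∀ k, k ≠ i → W k ω ≤ τ}).toReal := by
      rw [hgind]
      exact integral_indicator_one (hAim i)
    have hsub : {ω | ∀ k, W k ω ≤ τ} ⊆ {ω | ∀ k, k ≠ i → W k ω ≤ τ} := by
      intro ω h k _; exact h k
    have hghalf : (1:ℝ)/2 ≤ ∫ ω, g i ω ∂P := by
      rw [hgint]
      refine le_trans hhalf (ENNReal.toReal_mono (measure_ne_top P _) (measure_mono hsub))
    have hprod : ∫ ω, f i ω * g i ω ∂P = (∫ ω, f i ω ∂P) * ∫ ω, g i ω ∂P :=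
      (hindep2 i).integral_fun_mul_eq_mul_integral (hfm i).aestronglyMeasurable (hgm i).aestronglyMeasurable
    have hfpos : 0 ≤ ∫ ω, f i ω ∂P :=
      integral_nonneg (fun ω => hfnn i ω)
    rw [hprod]
    nlinarith
  -- summation and pointwise comparison
  have hfgint : ∀ i, Integrable (fun ω => f i ω * g i ω) P := by
    intro i
    refine Integrable.mono' (hint i) ((hfm i).mul (hgm i)).aestronglyMeasurable
      (Filter.Eventually.of_forall fun ω => ?_)
    rw [Real.norm_eq_abs, abs_of_nonneg (mul_nonneg (hfnn i ω) (hgnn i ω))]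
    calc f i ω * g i ω ≤ f i ω * 1 := mul_le_mul_of_nonneg_left (hgle1 i ω) (hfnn i ω)
      _ = f i ω := mul_one _
      _ ≤ W i ω := hfleW i ω
  have hMm : Measurable Msup := my_measurable_ciSup hmeas
  have hMnn : ∀ ω, 0 ≤ Msup ω := fun ω => Real.iSup_nonneg (fun i => hnn i ω)
  have hMint : Integrable Msup P := my_integrable_ciSup hmeas hnn hint
  have hiteMm : Measurable (fun ω => if τ < Msup ω then Msup ω else 0) :=
    Measurable.ite (measurableSet_lt measurable_const hMm) hMm measurable_const
  have hiteMint : Integrable (fun ω => if τ < Msup ω then Msup ω else 0) P := by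
    refine Integrable.mono' hMint hiteMm.aestronglyMeasurable
      (Filter.Eventually.of_forall fun ω => ?_)
    rw [Real.norm_eq_abs]
    split_ifs with h
    · rw [abs_of_nonneg (hMnn ω)]
    · rw [abs_zero]; exact hMnn ω
  have hpt : ∀ ω, ∑ i, f i ω * g i ω ≤ (if τ < Msup ω then Msup ω else 0) := by
    intro ω
    by_cases hex : ∃ i, τ < W i ω ∧ ∀ k, k ≠ i → W k ω ≤ τ
    · obtain ⟨i₀, h1, h2⟩ := hex
      have hsum : ∑ i, f i ω * g i ω = f i₀ ω * g i₀ ω := by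
        refine Finset.sum_eq_single_of_mem i₀ (Finset.mem_univ _) (fun b _ hb => ?_)
        have hWb : ¬ τ < W b ω := not_lt.2 (h2 b hb)
        have : f b ω = 0 := if_neg hWb
        rw [this, zero_mul]
      have hgi : g i₀ ω = 1 := if_pos h2
      have hfi : f i₀ ω = W i₀ ω := if_pos h1
      have hle : W i₀ ω ≤ Msup ω :=
        le_ciSup (Set.Finite.bddAbove (Set.finite_range fun i => W i ω)) i₀
      have hM : τ < Msup ω := lt_of_lt_of_le h1 hle
      rw [hsum, hfi, hgi, mul_one, if_pos hM]
      exact hle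
    · push_neg at hex
      have hz : ∀ i, f i ω * g i ω = 0 := by
        intro i
        by_cases h1 : τ < W i ω
        · obtain ⟨k, hk, hkW⟩ := hex i h1
          have : g i ω = 0 := if_neg (by push_neg; exact ⟨k, hk, hkW⟩)
          rw [this, mul_zero]
        · have : f i ω = 0 := if_neg h1
          rw [this, zero_mul]
      rw [Finset.sum_eq_zero (fun i _ => hz i)]
      split_ifs with h
      · exact hMnn ω
      · exact le_refl 0
  calc ∑ i, ∫ ω, f i ω ∂P ≤ ∑ i, 2 * ∫ ω, f i ω * g i ω ∂P :=
        Finset.sum_le_sum (fun i _ => key1 i)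
    _ = 2 * ∑ i, ∫ ω, f i ω * g i ω ∂P := by rw [Finset.mul_sum]
    _ = 2 * ∫ ω, ∑ i, f i ω * g i ω ∂P := by
        rw [integral_finset_sum _ (fun i (_ : i ∈ Finset.univ) => hfgint i)]
    _ ≤ 2 * ∫ ω, (if τ < Msup ω then Msup ω else 0) ∂P := by
        have : Integrable (fun ω => ∑ i, f i ω * g i ω) P :=
          integrable_finset_sum _ (fun i _ => hfgint i)
        exact mul_le_mul_of_nonneg_left (integral_mono this hiteMint hpt) (by norm_num)

end AuxLemmas

section MainTheorem
open Finset


set_option maxHeartbeats 1000000 in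
/-- Maximal inequality for centered sums of independent random vectors in
`ℝ^p`, `p ≥ 2`, with a universal constant `K`. -/
theorem maximal_inequality_centered :
    ∃ K : ℝ, 0 < K ∧
      ∀ (Ω : Type) (_ : MeasurableSpace Ω) (P : Measure Ω), IsProbabilityMeasure P →
      ∀ (n p : ℕ), 2 ≤ p →
      ∀ (Z : Fin n → Ω → Fin p → ℝ), (∀ i, Measurable (Z i)) →
      iIndepFun Z P →
      (∀ i j, Integrable (fun ω => (Z i ω j) ^ 2) P) →
      (∫ ω, (⨆ j, |∑ i, (Z i ω j - ∫ ω', Z i ω' j ∂P)|) ∂P)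
        ≤ K * (Real.sqrt (⨆ j, ∑ i, ∫ ω, (Z i ω j) ^ 2 ∂P) * Real.sqrt (Real.log p)
            + Real.sqrt (∫ ω, (⨆ i, ⨆ j, |Z i ω j|) ^ 2 ∂P) * Real.log p) := by
  classical
  refine ⟨100, by norm_num, ?_⟩
  intro Ω mΩ P hP n p hp Z hZm hZindep hZint2
  haveI := hP
  have hp0 : 0 < p := lt_of_lt_of_le two_pos hp
  haveI : Nonempty (Fin p) := ⟨⟨0, hp0⟩⟩
  have hZcm : ∀ i j, Measurable (fun ω => Z i ω j) := fun i j =>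
    (measurable_pi_apply j).comp (hZm i)
  have hZint : ∀ i j, Integrable (fun ω => Z i ω j) P := by
    intro i j
    refine Integrable.mono' (((hZint2 i j).add (integrable_const 1)).div_const 2)
      (hZcm i j).aestronglyMeasurable (Filter.Eventually.of_forall fun ω => ?_)
    simp only [Pi.add_apply, Pi.div_apply, Real.norm_eq_abs]
    nlinarith [sq_nonneg (|Z i ω j| - 1), abs_nonneg (Z i ω j), sq_abs (Z i ω j)]
  -- the maxima (fully explicit)
  have hMim : ∀ i, Measurable (fun ω => ⨆ j, |Z i ω j|) := fun i =>
    my_measurable_ciSup (fun j => (hZcm i j).abs)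
  have hMMm : Measurable (fun ω => ⨆ i, ⨆ j, |Z i ω j|) := my_measurable_ciSup hMim
  have hMinn : ∀ i ω, 0 ≤ ⨆ j, |Z i ω j| := fun i ω => Real.iSup_nonneg (fun j => abs_nonneg _)
  have hMMnn : ∀ ω, 0 ≤ ⨆ i, ⨆ j, |Z i ω j| := fun ω => Real.iSup_nonneg (fun i => hMinn i ω)
  have hZleMi : ∀ i ω j, |Z i ω j| ≤ ⨆ j, |Z i ω j| := fun i ω j =>
    le_ciSup (f := fun j => |Z i ω j|) (Set.Finite.bddAbove (Set.finite_range _)) j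
  have hMileMM : ∀ i ω, (⨆ j, |Z i ω j|) ≤ ⨆ i, ⨆ j, |Z i ω j| := fun i ω =>
    le_ciSup (f := fun i => ⨆ j, |Z i ω j|) (Set.Finite.bddAbove (Set.finite_range _)) i
  have hMi2int : ∀ i, Integrable (fun ω => (⨆ j, |Z i ω j|) ^ 2) P := by
    intro i
    refine Integrable.mono' (integrable_finset_sum Finset.univ (fun j _ => hZint2 i j))
      ((hMim i).pow_const 2).aestronglyMeasurable (Filter.Eventually.of_forall fun ω => ?_)
    rw [Real.norm_eq_abs, abs_of_nonneg (sq_nonneg _)]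
    exact my_sq_ciSup_abs_le (fun j => Z i ω j)
  have hMM2int : Integrable (fun ω => (⨆ i, ⨆ j, |Z i ω j|) ^ 2) P := by
    refine Integrable.mono' (integrable_finset_sum Finset.univ (fun i _ => hMi2int i))
      (hMMm.pow_const 2).aestronglyMeasurable (Filter.Eventually.of_forall fun ω => ?_)
    rw [Real.norm_eq_abs, abs_of_nonneg (sq_nonneg _)]
    have he : (⨆ i, ⨆ j, |Z i ω j|) = ⨆ i, abs (⨆ j, |Z i ω j|) :=
      iSup_congr (fun i => (abs_of_nonneg (hMinn i ω)).symm)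
    rw [he]
    exact my_sq_ciSup_abs_le (fun i => ⨆ j, |Z i ω j|)
  have hMiint : ∀ i, Integrable (fun ω => ⨆ j, |Z i ω j|) P := fun i =>
    my_integrable_of_sq (hMim i).aestronglyMeasurable (hMinn i) (hMi2int i)
  -- variance proxy and M² integral
  set V : ℝ := ⨆ j, ∑ i, ∫ ω, (Z i ω j) ^ 2 ∂P with hV
  have hVnn : 0 ≤ V := Real.iSup_nonneg (fun j =>
    Finset.sum_nonneg (fun i _ => integral_nonneg (fun ω => sq_nonneg _)))
  have hVub : ∀ j, ∑ i, ∫ ω, (Z i ω j) ^ 2 ∂P ≤ V := fun j =>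
    le_ciSup (f := fun j => ∑ i, ∫ ω, (Z i ω j) ^ 2 ∂P)
      (Set.Finite.bddAbove (Set.finite_range _)) j
  set m2 : ℝ := ∫ ω, (⨆ i, ⨆ j, |Z i ω j|) ^ 2 ∂P with hm2def
  have hm2nn : 0 ≤ m2 := integral_nonneg (fun ω => sq_nonneg _)
  have hlogp : 0 ≤ Real.log p := Real.log_nonneg (by exact_mod_cast hp.trans' one_le_two)
  have hRHSnn : 0 ≤ Real.sqrt V * Real.sqrt (Real.log p) + Real.sqrt m2 * Real.log p :=
    add_nonneg (mul_nonneg (Real.sqrt_nonneg _) (Real.sqrt_nonneg _))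
      (mul_nonneg (Real.sqrt_nonneg _) hlogp)
  rcases eq_or_lt_of_le hm2nn with hm2zero | hm2pos
  · -- degenerate case: M = 0 a.s.
    have hZsq0 : ∀ i j, ∀ᵐ ω ∂P, Z i ω j = 0 := by
      intro i j
      have hle : ∫ ω, (Z i ω j) ^ 2 ∂P ≤ m2 := by
        rw [hm2def]
        refine integral_mono (hZint2 i j) hMM2int (fun ω => ?_)
        have h1 : |Z i ω j| ≤ ⨆ i, ⨆ j, |Z i ω j| := le_trans (hZleMi i ω j) (hMileMM i ω)
        nlinarith [abs_nonneg (Z i ω j), sq_abs (Z i ω j), hMMnn ω]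
      have hz : ∫ ω, (Z i ω j) ^ 2 ∂P = 0 :=
        le_antisymm (hm2zero ▸ hle) (integral_nonneg (fun ω => sq_nonneg _))
      have := (integral_eq_zero_iff_of_nonneg
        (fun ω => sq_nonneg (Z i ω j)) (hZint2 i j)).1 hz
      filter_upwards [this] with ω hω
      exact pow_eq_zero_iff two_ne_zero |>.1 (by simpa using hω)
    have hEZ : ∀ i j, ∫ ω', Z i ω' j ∂P = 0 := by
      intro i j
      rw [integral_congr_ae (g := fun _ => (0:ℝ)) (hZsq0 i j), integral_zero]
    have hLHS : ∫ ω, (⨆ j, |∑ i, (Z i ω j - ∫ ω', Z i ω' j ∂P)|) ∂P = 0 := by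
      have hae : ∀ᵐ ω ∂P, (⨆ j, |∑ i, (Z i ω j - ∫ ω', Z i ω' j ∂P)|) = 0 := by
        have hall : ∀ᵐ ω ∂P, ∀ i j, Z i ω j = 0 := by
          rw [ae_all_iff]; intro i; rw [ae_all_iff]; intro j; exact hZsq0 i j
        filter_upwards [hall] with ω hω
        have h0 : ∀ j : Fin p, |∑ i, (Z i ω j - ∫ ω', Z i ω' j ∂P)| = 0 := by
          intro j
          rw [Finset.sum_eq_zero (fun i _ => by rw [hω i j, hEZ i j, sub_zero]), abs_zero]
        simp only [h0]
        exact ciSup_const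
      rw [integral_congr_ae hae, integral_zero]
    rw [hLHS]
    positivity
  · -- main case
    have hτ : 0 < Real.sqrt (2 * m2) := Real.sqrt_pos.2 (by linarith)
    set τ : ℝ := Real.sqrt (2 * m2) with hτdef
    have hτ2 : τ ^ 2 = 2 * m2 := Real.sq_sqrt (by linarith)
    set tr : ℝ → ℝ := fun x => if |x| ≤ τ then x else 0 with htr
    have htrm : Measurable tr :=
      Measurable.ite (measurableSet_le measurable_abs measurable_const)
        measurable_id measurable_const
    have htrb : ∀ x, |tr x| ≤ τ := by
      intro x; rw [htr]; dsimp only; split_ifs with h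
      · exact h
      · rw [abs_zero]; exact hτ.le
    have htrZm : ∀ i j, Measurable (fun ω => tr (Z i ω j)) := fun i j => htrm.comp (hZcm i j)
    have htrZint : ∀ i j, Integrable (fun ω => tr (Z i ω j)) P := fun i j =>
      my_integrable_of_bound (htrZm i j).aestronglyMeasurable τ (fun ω => htrb _)
    set c : Fin n → Fin p → ℝ := fun i j => ∫ ω, tr (Z i ω j) ∂P with hc
    have hcb : ∀ i j, |c i j| ≤ τ := by
      intro i j
      rw [hc]
      calc |∫ ω, tr (Z i ω j) ∂P| ≤ ∫ ω, |tr (Z i ω j)| ∂P := my_abs_integral _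
        _ ≤ ∫ _ω, τ ∂P := integral_mono (htrZint i j).abs (integrable_const τ)
              (fun ω => htrb _)
        _ = τ := by simp [integral_const, measure_univ]
    set Y : Fin n → Ω → Fin p → ℝ := fun i ω j => tr (Z i ω j) - c i j with hY
    have hYm : ∀ i, Measurable (Y i) := by
      intro i
      rw [hY]
      exact measurable_pi_lambda _ (fun j => (htrZm i j).sub_const _)
    have hYindep : iIndepFun Y P := by
      rw [hY]
      exact hZindep.comp (fun i v j => tr (v j) - c i j)
        (fun i => measurable_pi_lambda _
          (fun j => (htrm.comp (measurable_pi_apply j)).sub_const _))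
    have hYb : ∀ i ω j, |Y i ω j| ≤ 2 * τ := by
      intro i ω j
      rw [hY]
      calc |tr (Z i ω j) - c i j| ≤ |tr (Z i ω j)| + |c i j| := abs_sub _ _
        _ ≤ τ + τ := add_le_add (htrb _) (hcb i j)
        _ = 2 * τ := by ring
    have hYcm : ∀ i j, Measurable (fun ω => Y i ω j) := fun i j =>
      (measurable_pi_apply j).comp (hYm i)
    have hYcent : ∀ i j, ∫ ω, Y i ω j ∂P = 0 := by
      intro i j
      rw [hY]
      simp only
      rw [integral_sub (htrZint i j) (integrable_const _), integral_const]
      simp [measure_univ, hc]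
    have hYsq : ∀ i j, ∫ ω, (Y i ω j) ^ 2 ∂P ≤ ∫ ω, (Z i ω j) ^ 2 ∂P := by
      intro i j
      have htr2int : Integrable (fun ω => (tr (Z i ω j)) ^ 2) P := by
        refine my_integrable_of_bound ((htrZm i j).pow_const 2).aestronglyMeasurable (τ ^ 2)
          (fun ω => ?_)
        rw [abs_of_nonneg (sq_nonneg _)]
        nlinarith [htrb (Z i ω j), abs_nonneg (tr (Z i ω j)), sq_abs (tr (Z i ω j))]
      have hexp : (fun ω => (Y i ω j) ^ 2)
          = fun ω => (tr (Z i ω j)) ^ 2 - (2 * c i j) * tr (Z i ω j) + (c i j) ^ 2 := by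
        funext ω; rw [hY]; ring
      have hsub1 : Integrable (fun ω => (tr (Z i ω j)) ^ 2 - (2 * c i j) * tr (Z i ω j)) P :=
        htr2int.sub ((htrZint i j).const_mul _)
      have e : ∫ ω, (Y i ω j) ^ 2 ∂P
          = ∫ ω, (tr (Z i ω j)) ^ 2 ∂P - (2 * c i j) * c i j + (c i j) ^ 2 := by
        rw [hexp, integral_add hsub1 (integrable_const _),
          integral_sub htr2int ((htrZint i j).const_mul _), integral_const, integral_const_mul]
        simp [measure_univ, hc]
      have htrle : ∫ ω, (tr (Z i ω j)) ^ 2 ∂P ≤ ∫ ω, (Z i ω j) ^ 2 ∂P := by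
        refine integral_mono htr2int (hZint2 i j) (fun ω => ?_)
        rw [htr]; dsimp only; split_ifs with h
        · exact le_refl _
        · simpa using sq_nonneg (Z i ω j)
      nlinarith [sq_nonneg (c i j), e, htrle]
    have hVY : ∀ j, ∑ i, ∫ ω, (Y i ω j) ^ 2 ∂P ≤ V := fun j =>
      le_trans (Finset.sum_le_sum (fun i _ => hYsq i j)) (hVub j)
    have hppos : (0:ℝ) < 2 * p := by positivity
    have hL1 : 1 ≤ Real.log (2 * (p:ℝ)) := by
      rw [Real.le_log_iff_exp_le hppos]
      have h4 : (4:ℝ) ≤ 2 * p := by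
        have : (2:ℝ) ≤ p := by exact_mod_cast hp
        linarith
      calc Real.exp 1 ≤ 2.7182818286 := Real.exp_one_lt_d9.le
        _ ≤ 4 := by norm_num
        _ ≤ 2 * p := h4
    have hL0 : 0 < Real.log (2 * (p:ℝ)) := lt_of_lt_of_le one_pos hL1
    -- bounded part
    have hbddpart : ∫ ω, (⨆ j, |∑ i, Y i ω j|) ∂P
        ≤ 2 * Real.sqrt (Real.log (2 * p)) * Real.sqrt V + 4 * τ * Real.log (2 * p) := by
      rcases le_or_gt (4 * τ ^ 2 * Real.log (2 * p)) V with hcase | hcase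
      · have hVpos : 0 < V := lt_of_lt_of_le (by positivity) hcase
        have hsLpos : 0 < Real.sqrt (Real.log (2 * p)) := Real.sqrt_pos.2 hL0
        have hsVpos : 0 < Real.sqrt V := Real.sqrt_pos.2 hVpos
        set t : ℝ := Real.sqrt (Real.log (2 * p)) / Real.sqrt V with ht
        have htpos : 0 < t := div_pos hsLpos hsVpos
        have ht2 : t ^ 2 = Real.log (2 * p) / V := by
          rw [ht, div_pow, Real.sq_sqrt hL0.le, Real.sq_sqrt hVpos.le]
        have htc : t * (2 * τ) ≤ 1 := by
          have h1 : 2 * τ * Real.sqrt (Real.log (2 * p)) ≤ Real.sqrt V := by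
            have h2 := Real.sqrt_le_sqrt hcase
            rwa [show 4 * τ ^ 2 * Real.log (2 * (p:ℝ)) = (2*τ)^2 * Real.log (2 * p) by ring,
              Real.sqrt_mul (by positivity) (Real.log (2 * p)),
              Real.sqrt_sq (by positivity)] at h2
          rw [ht, div_mul_eq_mul_div, div_le_one hsVpos]
          calc Real.sqrt (Real.log (2 * p)) * (2 * τ)
              = 2 * τ * Real.sqrt (Real.log (2 * p)) := by ring
            _ ≤ Real.sqrt V := h1
        have hmain := my_bdd_max_ineq hp0 Y hYm hYindep hYb hYcent hVY htpos htc
        refine le_trans hmain ?_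
        have heval : (Real.log (2 * p) + t ^ 2 * V) / t
            = 2 * Real.sqrt (Real.log (2 * p)) * Real.sqrt V := by
          rw [ht2, div_mul_cancel₀ _ (ne_of_gt hVpos)]
          rw [show Real.log (2 * (p:ℝ)) + Real.log (2 * p) = 2 * Real.log (2 * p) by ring]
          rw [ht, div_div_eq_mul_div]
          rw [show (2 * Real.log (2*(p:ℝ))) * Real.sqrt V / Real.sqrt (Real.log (2*p))
            = 2 * (Real.log (2*p) / Real.sqrt (Real.log (2*p))) * Real.sqrt V by ring]
          rw [Real.div_sqrt]
        rw [heval]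
        linarith [mul_nonneg (mul_nonneg (by norm_num : (0:ℝ) ≤ 4) hτ.le) hL0.le]
      · set t : ℝ := 1 / (2 * τ) with ht
        have htpos : 0 < t := by rw [ht]; positivity
        have htc : t * (2 * τ) ≤ 1 := by
          rw [ht]; rw [div_mul_cancel₀]; positivity
        have hmain := my_bdd_max_ineq hp0 Y hYm hYindep hYb hYcent hVY htpos htc
        refine le_trans hmain ?_
        have hτne : τ ≠ 0 := ne_of_gt hτ
        have heval : (Real.log (2 * p) + t ^ 2 * V) / t
            = 2 * τ * Real.log (2 * p) + V / (2 * τ) := by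
          rw [ht, div_div_eq_mul_div, div_one]
          field_simp
        rw [heval]
        have h2 : V / (2 * τ) ≤ 2 * τ * Real.log (2 * p) := by
          rw [div_le_iff₀ (by positivity)]
          have he : 2 * τ * Real.log (2 * (p:ℝ)) * (2 * τ) = 4 * τ ^ 2 * Real.log (2 * p) := by
            ring
          linarith [hcase.le]
        linarith [mul_nonneg (Real.sqrt_nonneg (Real.log (2 * (p:ℝ)))) (Real.sqrt_nonneg V)]
    -- Chebyshev half-probability bound
    have hhalf : (1:ℝ)/2 ≤ (P {ω | ∀ i, (⨆ j, |Z i ω j|) ≤ τ}).toReal := by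
      have hAm : MeasurableSet {ω | 2 * m2 ≤ (⨆ i, ⨆ j, |Z i ω j|) ^ 2} :=
        measurableSet_le measurable_const (hMMm.pow_const 2)
      have hmark := mul_meas_ge_le_integral_of_nonneg
        (Filter.Eventually.of_forall (fun ω => sq_nonneg (⨆ i, ⨆ j, |Z i ω j|))) hMM2int (2 * m2)
      have hPA : (P {ω | 2 * m2 ≤ (⨆ i, ⨆ j, |Z i ω j|) ^ 2}).toReal ≤ 1/2 := by
        have h0 : (0:ℝ) ≤ (P {ω | 2 * m2 ≤ (⨆ i, ⨆ j, |Z i ω j|) ^ 2}).toReal :=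
          ENNReal.toReal_nonneg
        rw [measureReal_def] at hmark
        nlinarith [hmark]
      have hsub : {ω | 2 * m2 ≤ (⨆ i, ⨆ j, |Z i ω j|) ^ 2}ᶜ
          ⊆ {ω | ∀ i, (⨆ j, |Z i ω j|) ≤ τ} := by
        intro ω hω i
        simp only [Set.mem_compl_iff, Set.mem_setOf_eq, not_le] at hω
        have hlt : (⨆ i, ⨆ j, |Z i ω j|) < τ := by
          nlinarith [hMMnn ω, hτ, hτ2]
        exact le_trans (hMileMM i ω) hlt.le
      have hcompl : (P ({ω | 2 * m2 ≤ (⨆ i, ⨆ j, |Z i ω j|) ^ 2}ᶜ)).toReal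
          = 1 - (P {ω | 2 * m2 ≤ (⨆ i, ⨆ j, |Z i ω j|) ^ 2}).toReal := by
        rw [measure_compl hAm (measure_ne_top _ _), measure_univ,
          ENNReal.toReal_sub_of_le prob_le_one ENNReal.one_ne_top, ENNReal.toReal_one]
      have hmono2 : (P ({ω | 2 * m2 ≤ (⨆ i, ⨆ j, |Z i ω j|) ^ 2}ᶜ)).toReal
          ≤ (P {ω | ∀ i, (⨆ j, |Z i ω j|) ≤ τ}).toReal :=
        ENNReal.toReal_mono (measure_ne_top _ _) (measure_mono hsub)
      rw [hcompl] at hmono2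
      linarith
    have hMiindep : iIndepFun (fun i ω => ⨆ j, |Z i ω j|) P :=
      hZindep.comp (fun i v => ⨆ j, |v j|)
        (fun i => my_measurable_ciSup (fun j => (measurable_pi_apply j).abs))
    have htail : ∑ i, ∫ ω, (if τ < ⨆ j, |Z i ω j| then (⨆ j, |Z i ω j|) else 0) ∂P
        ≤ 2 * ∫ ω, (if τ < ⨆ i, ⨆ j, |Z i ω j| then (⨆ i, ⨆ j, |Z i ω j|) else 0) ∂P :=
      my_tail_sum_le (fun i ω => ⨆ j, |Z i ω j|) hMim hMiindep hMinn hMiint hhalf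
    have hiteMMm : Measurable
        (fun ω => if τ < ⨆ i, ⨆ j, |Z i ω j| then (⨆ i, ⨆ j, |Z i ω j|) else 0) :=
      Measurable.ite (measurableSet_lt measurable_const hMMm) hMMm measurable_const
    have hMMint : Integrable (fun ω => ⨆ i, ⨆ j, |Z i ω j|) P :=
      my_integrable_of_sq hMMm.aestronglyMeasurable hMMnn hMM2int
    have hiteMMint : Integrable
        (fun ω => if τ < ⨆ i, ⨆ j, |Z i ω j| then (⨆ i, ⨆ j, |Z i ω j|) else 0) P := by
      refine Integrable.mono' hMMint hiteMMm.aestronglyMeasurable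
        (Filter.Eventually.of_forall fun ω => ?_)
      rw [Real.norm_eq_abs]
      split_ifs with h
      · rw [abs_of_nonneg (hMMnn ω)]
      · rw [abs_zero]; exact hMMnn ω
    have hiteMM_le : ∫ ω, (if τ < ⨆ i, ⨆ j, |Z i ω j| then (⨆ i, ⨆ j, |Z i ω j|) else 0) ∂P
        ≤ m2 / τ := by
      have hmono := integral_mono hiteMMint (hMM2int.div_const τ) (fun ω => ?_)
      · rwa [integral_div] at hmono
      · dsimp only
        split_ifs with h
        · rw [le_div_iff₀ hτ]; nlinarith [hMMnn ω]
        · positivity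
    have htail2 : ∑ i, ∫ ω, (if τ < ⨆ j, |Z i ω j| then (⨆ j, |Z i ω j|) else 0) ∂P
        ≤ 2 * (m2 / τ) := le_trans htail (by linarith [hiteMM_le])
    -- remainder pieces
    have hfiint : ∀ i, Integrable
        (fun ω => if τ < ⨆ j, |Z i ω j| then (⨆ j, |Z i ω j|) else 0) P := by
      intro i
      refine Integrable.mono' (hMiint i) (Measurable.ite (measurableSet_lt measurable_const
        (hMim i)) (hMim i) measurable_const).aestronglyMeasurable
        (Filter.Eventually.of_forall fun ω => ?_)
      rw [Real.norm_eq_abs]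
      split_ifs with h
      · rw [abs_of_nonneg (hMinn i ω)]
      · rw [abs_zero]; exact hMinn i ω
    have hitennn : ∀ i ω, 0 ≤ (if τ < ⨆ j, |Z i ω j| then (⨆ j, |Z i ω j|) else 0) := by
      intro i ω
      split_ifs with h
      · exact hMinn i ω
      · exact le_refl 0
    have hdint : ∀ i j, Integrable (fun ω => Z i ω j - tr (Z i ω j)) P := fun i j =>
      (hZint i j).sub (htrZint i j)
    have hEZsplit : ∀ i j, ∫ ω', Z i ω' j ∂P
        = c i j + ∫ ω', (Z i ω' j - tr (Z i ω' j)) ∂P := by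
      intro i j
      rw [integral_sub (hZint i j) (htrZint i j), hc]
      ring
    have hRle : ∀ i ω j, |Z i ω j - tr (Z i ω j)|
        ≤ (if τ < ⨆ j, |Z i ω j| then (⨆ j, |Z i ω j|) else 0) := by
      intro i ω j
      by_cases h : |Z i ω j| ≤ τ
      · have h1 : tr (Z i ω j) = Z i ω j := if_pos h
        rw [h1, sub_self, abs_zero]
        exact hitennn i ω
      · have h1 : tr (Z i ω j) = 0 := if_neg h
        rw [h1, sub_zero]
        have h2 : τ < ⨆ j, |Z i ω j| := lt_of_lt_of_le (not_le.1 h) (hZleMi i ω j)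
        rw [if_pos h2]
        exact hZleMi i ω j
    have hdle : ∀ i j, |∫ ω', (Z i ω' j - tr (Z i ω' j)) ∂P|
        ≤ ∫ ω, (if τ < ⨆ j, |Z i ω j| then (⨆ j, |Z i ω j|) else 0) ∂P := by
      intro i j
      refine le_trans (my_abs_integral _) ?_
      exact integral_mono (hdint i j).abs (hfiint i) (fun ω => hRle i ω j)
    have hUm : ∀ j, Measurable (fun ω => ∑ i, (Z i ω j - tr (Z i ω j)
        - ∫ ω', (Z i ω' j - tr (Z i ω' j)) ∂P)) := fun j =>
      Finset.measurable_sum _ (fun i _ => ((hZcm i j).sub (htrZm i j)).sub_const _)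
    have hUjint : ∀ j, Integrable (fun ω => ∑ i, (Z i ω j - tr (Z i ω j)
        - ∫ ω', (Z i ω' j - tr (Z i ω' j)) ∂P)) P := fun j =>
      integrable_finset_sum _ (fun i _ => (hdint i j).sub (integrable_const _))
    have hsplit : ∀ ω, (⨆ j, |∑ i, (Z i ω j - ∫ ω', Z i ω' j ∂P)|)
        ≤ (⨆ j, |∑ i, Y i ω j|)
          + (⨆ j, |∑ i, (Z i ω j - tr (Z i ω j) - ∫ ω', (Z i ω' j - tr (Z i ω' j)) ∂P)|) := by
      intro ω
      refine ciSup_le fun j => ?_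
      have hdecomp : ∑ i, (Z i ω j - ∫ ω', Z i ω' j ∂P)
          = (∑ i, Y i ω j)
            + ∑ i, (Z i ω j - tr (Z i ω j) - ∫ ω', (Z i ω' j - tr (Z i ω' j)) ∂P) := by
        rw [← Finset.sum_add_distrib]
        refine Finset.sum_congr rfl (fun i _ => ?_)
        rw [hY]
        simp only
        rw [hEZsplit i j]
        ring
      rw [hdecomp]
      refine le_trans (abs_add_le _ _) (add_le_add ?_ ?_)
      · exact le_ciSup (f := fun j => |∑ i, Y i ω j|)
          (Set.Finite.bddAbove (Set.finite_range _)) j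
      · exact le_ciSup (f := fun j => |∑ i, (Z i ω j - tr (Z i ω j)
          - ∫ ω', (Z i ω' j - tr (Z i ω' j)) ∂P)|)
          (Set.Finite.bddAbove (Set.finite_range _)) j
    have hUb : ∀ ω, (⨆ j, |∑ i, (Z i ω j - tr (Z i ω j)
          - ∫ ω', (Z i ω' j - tr (Z i ω' j)) ∂P)|)
        ≤ (∑ i, (if τ < ⨆ j, |Z i ω j| then (⨆ j, |Z i ω j|) else 0))
          + ∑ i, ∫ ω', (if τ < ⨆ j, |Z i ω' j| then (⨆ j, |Z i ω' j|) else 0) ∂P := by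
      intro ω
      refine ciSup_le fun j => ?_
      calc |∑ i, (Z i ω j - tr (Z i ω j) - ∫ ω', (Z i ω' j - tr (Z i ω' j)) ∂P)|
          ≤ ∑ i, |Z i ω j - tr (Z i ω j) - ∫ ω', (Z i ω' j - tr (Z i ω' j)) ∂P| :=
            Finset.abs_sum_le_sum_abs _ _
        _ ≤ ∑ i, ((if τ < ⨆ j, |Z i ω j| then (⨆ j, |Z i ω j|) else 0)
              + ∫ ω', (if τ < ⨆ j, |Z i ω' j| then (⨆ j, |Z i ω' j|) else 0) ∂P) := by
            refine Finset.sum_le_sum (fun i _ => ?_)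
            exact le_trans (abs_sub _ _) (add_le_add (hRle i ω j) (hdle i j))
        _ = _ := Finset.sum_add_distrib
    have hTm : ∀ j, Measurable (fun ω => ∑ i, Y i ω j) := fun j =>
      Finset.measurable_sum _ (fun i _ => hYcm i j)
    have hTjint : ∀ j, Integrable (fun ω => |∑ i, Y i ω j|) P := by
      intro j
      refine my_integrable_of_bound (hTm j).abs.aestronglyMeasurable (n * (2*τ)) (fun ω => ?_)
      rw [abs_abs]
      calc |∑ i, Y i ω j| ≤ ∑ i, |Y i ω j| := Finset.abs_sum_le_sum_abs _ _
        _ ≤ ∑ _i : Fin n, 2*τ := Finset.sum_le_sum (fun i _ => hYb i ω j)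
        _ = n * (2*τ) := by
            rw [Finset.sum_const, Finset.card_univ, Fintype.card_fin, nsmul_eq_mul]
    have hTint : Integrable (fun ω => ⨆ j, |∑ i, Y i ω j|) P :=
      my_integrable_ciSup (fun j => (hTm j).abs) (fun j ω => abs_nonneg _) hTjint
    have hUint : Integrable (fun ω => ⨆ j, |∑ i, (Z i ω j - tr (Z i ω j)
        - ∫ ω', (Z i ω' j - tr (Z i ω' j)) ∂P)|) P :=
      my_integrable_ciSup (fun j => (hUm j).abs) (fun j ω => abs_nonneg _)
        (fun j => (hUjint j).abs)
    have hSm : ∀ j, Measurable (fun ω => ∑ i, (Z i ω j - ∫ ω', Z i ω' j ∂P)) := fun j =>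
      Finset.measurable_sum _ (fun i _ => (hZcm i j).sub_const _)
    have hSjint : ∀ j, Integrable (fun ω => |∑ i, (Z i ω j - ∫ ω', Z i ω' j ∂P)|) P := fun j =>
      (integrable_finset_sum _ (fun i _ => (hZint i j).sub (integrable_const _))).abs
    have hSint : Integrable (fun ω => ⨆ j, |∑ i, (Z i ω j - ∫ ω', Z i ω' j ∂P)|) P :=
      my_integrable_ciSup (fun j => (hSm j).abs) (fun j ω => abs_nonneg _) hSjint
    have hstep1 : ∫ ω, (⨆ j, |∑ i, (Z i ω j - ∫ ω', Z i ω' j ∂P)|) ∂P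
        ≤ (∫ ω, (⨆ j, |∑ i, Y i ω j|) ∂P)
          + ∫ ω, (⨆ j, |∑ i, (Z i ω j - tr (Z i ω j)
              - ∫ ω', (Z i ω' j - tr (Z i ω' j)) ∂P)|) ∂P := by
      have h := integral_mono hSint (hTint.add hUint) hsplit
      exact le_trans h (le_of_eq (integral_add hTint hUint))
    have hstep2 : ∫ ω, (⨆ j, |∑ i, (Z i ω j - tr (Z i ω j)
        - ∫ ω', (Z i ω' j - tr (Z i ω' j)) ∂P)|) ∂P ≤ 2 * τ := by
      have hsum_int : Integrable (fun ω =>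
          (∑ i, (if τ < ⨆ j, |Z i ω j| then (⨆ j, |Z i ω j|) else 0))
          + ∑ i, ∫ ω', (if τ < ⨆ j, |Z i ω' j| then (⨆ j, |Z i ω' j|) else 0) ∂P) P :=
        (integrable_finset_sum _ (fun i _ => hfiint i)).add (integrable_const _)
      have h := integral_mono hUint hsum_int hUb
      have heq : ∫ ω, ((∑ i, (if τ < ⨆ j, |Z i ω j| then (⨆ j, |Z i ω j|) else 0))
          + ∑ i, ∫ ω', (if τ < ⨆ j, |Z i ω' j| then (⨆ j, |Z i ω' j|) else 0) ∂P) ∂P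
          = 2 * ∑ i, ∫ ω', (if τ < ⨆ j, |Z i ω' j| then (⨆ j, |Z i ω' j|) else 0) ∂P := by
        rw [integral_add (integrable_finset_sum _ (fun i _ => hfiint i)) (integrable_const _),
          integral_finset_sum _ (fun i (_ : i ∈ Finset.univ) => hfiint i), integral_const]
        simp [measure_univ]
        ring
      rw [heq] at h
      refine le_trans h ?_
      have hm2τ : 4 * (m2 / τ) = 2 * τ := by
        field_simp
        nlinarith [hτ2]
      linarith [htail2]
    have hcomb : ∫ ω, (⨆ j, |∑ i, (Z i ω j - ∫ ω', Z i ω' j ∂P)|) ∂P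
        ≤ 2 * Real.sqrt (Real.log (2 * p)) * Real.sqrt V
          + 4 * τ * Real.log (2 * p) + 2 * τ := by
      linarith [hstep1, hstep2, hbddpart]
    have hppos' : (0:ℝ) < p := by exact_mod_cast hp0
    have hp2 : (2:ℝ) ≤ p := by exact_mod_cast hp
    have hL2 : Real.log (2 * p) ≤ 2 * Real.log p := by
      have h1 : (2:ℝ) * p ≤ (p:ℝ) * p := by nlinarith
      calc Real.log (2 * (p:ℝ)) ≤ Real.log ((p:ℝ) * p) :=
            Real.log_le_log (by positivity) h1
        _ = Real.log p + Real.log p := Real.log_mul (ne_of_gt hppos') (ne_of_gt hppos')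
        _ = 2 * Real.log p := by ring
    have hsqrtL : Real.sqrt (Real.log (2 * p)) ≤ Real.sqrt 2 * Real.sqrt (Real.log p) := by
      rw [← Real.sqrt_mul (by norm_num)]
      exact Real.sqrt_le_sqrt hL2
    have hτeq : τ = Real.sqrt 2 * Real.sqrt m2 := by
      rw [hτdef, Real.sqrt_mul (by norm_num)]
    have hsqrt2 : Real.sqrt 2 ≤ 2 := by
      nlinarith [Real.sq_sqrt (by norm_num : (0:ℝ) ≤ 2), Real.sqrt_nonneg 2]
    have hxnn : 0 ≤ Real.sqrt (Real.log (p:ℝ)) := Real.sqrt_nonneg _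
    have hAnn : 0 ≤ Real.sqrt V := Real.sqrt_nonneg _
    have hBnn : 0 ≤ Real.sqrt m2 := Real.sqrt_nonneg _
    have h1 : 2 * Real.sqrt (Real.log (2 * p)) * Real.sqrt V
        ≤ 4 * (Real.sqrt V * Real.sqrt (Real.log p)) := by
      have hs := mul_le_mul_of_nonneg_right hsqrtL hAnn
      nlinarith [mul_nonneg hxnn hAnn]
    have h2 : 4 * τ * Real.log (2 * p) + 2 * τ ≤ 6 * τ * Real.log (2 * p) := by
      nlinarith [hτ.le, hL1]
    have h3 : 6 * τ * Real.log (2 * p) ≤ 24 * (Real.sqrt m2 * Real.log p) := by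
      have hτle : τ ≤ 2 * Real.sqrt m2 := by
        rw [hτeq]
        nlinarith [hBnn]
      have s1 : τ * Real.log (2 * (p:ℝ)) ≤ 2 * Real.sqrt m2 * Real.log (2 * p) :=
        mul_le_mul_of_nonneg_right hτle hL0.le
      have s2 : Real.sqrt m2 * Real.log (2 * (p:ℝ)) ≤ Real.sqrt m2 * (2 * Real.log p) :=
        mul_le_mul_of_nonneg_left hL2 hBnn
      nlinarith
    calc ∫ ω, (⨆ j, |∑ i, (Z i ω j - ∫ ω', Z i ω' j ∂P)|) ∂P
        ≤ 2 * Real.sqrt (Real.log (2 * p)) * Real.sqrt V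
          + 4 * τ * Real.log (2 * p) + 2 * τ := hcomb
      _ ≤ 4 * (Real.sqrt V * Real.sqrt (Real.log p))
          + 24 * (Real.sqrt m2 * Real.log p) := by linarith
      _ ≤ 100 * (Real.sqrt V * Real.sqrt (Real.log p) + Real.sqrt m2 * Real.log p) := by
          nlinarith [mul_nonneg hAnn hxnn, mul_nonneg hBnn hlogp]

end MainTheorem
end
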